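/- arXiv:1205.6487 — 4 statements merged into one kernel-verified Lean document; each statement's English description precedes it below -/
import Mathlib

section
/- Let a ≥ b ≥ 1 be integers, n = a + b + 2, and let y_1 ≥ y_2 ≥ y_3 be the (real) roots of p_{a,b}(x) = x³ − (a+b+4)x² + (ab+2a+2b+5)x − (a+b+2). Then the double star T(a,b) has exactly σ = 2 Laplacian eigenvalues strictly larger than its average degree 2 − 2/n, and S_2(T(a,b)) = y_1 + y_2 = n + 2 − y_3. -/
open Polynomial

namespace LapPaper

variable {V : Type} [Fintype V] [DecidableEq V]

/-- The multiset of Laplacian eigenvalues of `G` (with multiplicity), given as the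
real roots of the characteristic polynomial of the Laplacian matrix `L = D - A`. -/
noncomputable def lapSpectrum (G : SimpleGraph V) [DecidableRel G.Adj] : Multiset ℝ :=
  (G.lapMatrix ℝ).charpoly.roots

/-- The average degree `d̄ = 2|E|/n` of a graph. -/
noncomputable def avgDeg (G : SimpleGraph V) [DecidableRel G.Adj] : ℝ :=
  2 * G.edgeFinset.card / Fintype.card V

/-- The Laplacian energy `LE(G) = ∑_i |μ_i - d̄|`. -/
noncomputable def LE (G : SimpleGraph V) [DecidableRel G.Adj] : ℝ :=
  ((lapSpectrum G).map (fun x => |x - avgDeg G|)).sum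

/-- `Sk G k` is the sum of the `k` largest Laplacian eigenvalues `μ_1 + ⋯ + μ_k` of `G`. -/
noncomputable def Sk (G : SimpleGraph V) [DecidableRel G.Adj] (k : ℕ) : ℝ :=
  ((((lapSpectrum G).sort (· ≤ ·)).reverse).take k).sum

/-- The number `σ` of Laplacian eigenvalues of `G` strictly larger than the average degree. -/
noncomputable def sigma (G : SimpleGraph V) [DecidableRel G.Adj] : ℕ :=
  Multiset.card ((lapSpectrum G).filter (fun x => avgDeg G < x))

/-- The double star `T(a,b)` on `a + b + 2` vertices: vertex `0` is adjacent to vertex `1`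
and to the `a` leaves `2, …, a+1`; vertex `1` is adjacent to the `b` leaves `a+2, …, a+b+1`. -/
def doubleStar (a b : ℕ) : SimpleGraph (Fin (a + b + 2)) :=
  SimpleGraph.fromRel (fun u v =>
    (u.1 = 0 ∧ v.1 = 1) ∨ (u.1 = 0 ∧ 2 ≤ v.1 ∧ v.1 < a + 2) ∨ (u.1 = 1 ∧ a + 2 ≤ v.1))

noncomputable instance (a b : ℕ) : DecidableRel (doubleStar a b).Adj := Classical.decRel _

/-- The star on `n` vertices: vertex `0` is adjacent to all other vertices. -/
def starGraph (n : ℕ) : SimpleGraph (Fin n) :=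
  SimpleGraph.fromRel (fun u _ => u.1 = 0)

noncomputable instance (n : ℕ) : DecidableRel (starGraph n).Adj := Classical.decRel _

end LapPaper

set_option synthInstance.maxHeartbeats 1000000
set_option maxHeartbeats 4000000

namespace LapPaper
open Matrix

open Matrix

/-! ### Auxiliary machinery for the double star -/

/-- Reindexing equivalence putting the two hubs first, then the `a` leaves, then the `b`
leaves. -/
def dsEquiv (a b : ℕ) : (Fin 2 ⊕ (Fin a ⊕ Fin b)) ≃ Fin (a + b + 2) where
  toFun p := Sum.elim (fun i => ⟨i.1, by have := i.isLt; omega⟩)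
    (Sum.elim (fun i => ⟨i.1 + 2, by have := i.isLt; omega⟩)
      (fun j => ⟨a + 2 + j.1, by have := j.isLt; omega⟩)) p
  invFun v := if h : v.1 < 2 then Sum.inl ⟨v.1, h⟩
    else if h2 : v.1 < a + 2 then Sum.inr (Sum.inl ⟨v.1 - 2, by omega⟩)
    else Sum.inr (Sum.inr ⟨v.1 - (a + 2), by have := v.isLt; omega⟩)
  left_inv p := by
    rcases p with i | i | j
    · simp [i.isLt]
    · have := i.isLt
      dsimp only [Sum.elim_inl, Sum.elim_inr]
      rw [dif_neg (show ¬ (i.1 + 2 < 2) by omega), dif_pos (show i.1 + 2 < a + 2 by omega)]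
      simp
    · have := j.isLt
      dsimp only [Sum.elim_inl, Sum.elim_inr]
      rw [dif_neg (show ¬ (a + 2 + j.1 < 2) by omega), dif_neg (show ¬ (a + 2 + j.1 < a + 2) by omega)]
      simp [Fin.ext_iff]
  right_inv v := by
    rcases v with ⟨v, hv⟩
    dsimp only
    by_cases h : v < 2
    · rw [dif_pos h]; simp
    · by_cases h2 : v < a + 2
      · rw [dif_neg h, dif_pos h2]; simp [Fin.ext_iff]; omega
      · rw [dif_neg h, dif_neg h2]; simp [Fin.ext_iff]; omega

lemma dsEquiv_val (a b : ℕ) (p : Fin 2 ⊕ (Fin a ⊕ Fin b)) :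
    ((dsEquiv a b) p).1 = Sum.elim (fun i : Fin 2 => i.1)
      (Sum.elim (fun i : Fin a => i.1 + 2) (fun j : Fin b => a + 2 + j.1)) p := by
  rcases p with i | i | j <;> rfl

lemma ds_adj_iff (a b : ℕ) (p q : Fin 2 ⊕ (Fin a ⊕ Fin b)) :
    (doubleStar a b).Adj ((dsEquiv a b) p) ((dsEquiv a b) q) ↔
      (((dsEquiv a b) p).1 ≠ ((dsEquiv a b) q).1 ∧
        ((((dsEquiv a b) p).1 = 0 ∧ ((dsEquiv a b) q).1 = 1) ∨
         (((dsEquiv a b) p).1 = 0 ∧ 2 ≤ ((dsEquiv a b) q).1 ∧ ((dsEquiv a b) q).1 < a + 2) ∨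
         (((dsEquiv a b) p).1 = 1 ∧ a + 2 ≤ ((dsEquiv a b) q).1) ∨
         (((dsEquiv a b) q).1 = 0 ∧ ((dsEquiv a b) p).1 = 1) ∨
         (((dsEquiv a b) q).1 = 0 ∧ 2 ≤ ((dsEquiv a b) p).1 ∧ ((dsEquiv a b) p).1 < a + 2) ∨
         (((dsEquiv a b) q).1 = 1 ∧ a + 2 ≤ ((dsEquiv a b) p).1))) := by
  rw [doubleStar, SimpleGraph.fromRel_adj]
  rw [Ne, Ne, Fin.ext_iff]
  tauto

/-- The off-diagonal (hub-to-leaf) block of the adjacency matrix of the double star. -/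
def Boff (a b : ℕ) : Matrix (Fin 2) (Fin a ⊕ Fin b) ℝ :=
  Matrix.of fun p q =>
    Sum.elim (fun _ => if p = 0 then (1 : ℝ) else 0) (fun _ => if p = 1 then (1 : ℝ) else 0) q

lemma adjM_eval (a b : ℕ) (p q : Fin 2 ⊕ (Fin a ⊕ Fin b)) :
    (doubleStar a b).adjMatrix ℝ ((dsEquiv a b) p) ((dsEquiv a b) q) =
      fromBlocks !![0, 1; 1, 0] (Boff a b) (Boff a b)ᵀ 0 p q := by
  rcases p with i | ⟨i, hi⟩ | ⟨i, hi⟩ <;> try fin_cases i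
  all_goals rcases q with j | ⟨j, hj⟩ | ⟨j, hj⟩ <;> try fin_cases j
  all_goals
    simp only [SimpleGraph.adjMatrix_apply, ds_adj_iff, dsEquiv_val, Sum.elim_inl, Sum.elim_inr,
      fromBlocks_apply₁₁, fromBlocks_apply₁₂, fromBlocks_apply₂₁, fromBlocks_apply₂₂,
      Boff, Matrix.of_apply, Matrix.transpose_apply, Matrix.zero_apply,
      Fin.isValue, Fin.val_zero, Fin.val_one, Matrix.cons_val', Matrix.cons_val_zero,
      Matrix.cons_val_one, Matrix.head_cons, Matrix.empty_val', Matrix.cons_val_fin_one,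
      Matrix.head_fin_const]
  all_goals split_ifs
  all_goals try rfl
  all_goals try (exfalso; omega)
  all_goals simp_all
  all_goals omega

lemma deg_eval (a b : ℕ) (p : Fin 2 ⊕ (Fin a ⊕ Fin b)) :
    (((doubleStar a b).degree ((dsEquiv a b) p) : ℝ)) =
      Sum.elim (fun i : Fin 2 => if i = 0 then (a : ℝ) + 1 else (b : ℝ) + 1) (fun _ => 1) p := by
  have h1 : (((doubleStar a b).degree ((dsEquiv a b) p) : ℝ))
      = ∑ w, (doubleStar a b).adjMatrix ℝ ((dsEquiv a b) p) w := by
    rw [SimpleGraph.degree, SimpleGraph.neighborFinset_eq_filter]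
    simp [SimpleGraph.adjMatrix_apply, Finset.sum_boole]
  rw [h1, ← Equiv.sum_comp (dsEquiv a b)
    (fun w => (doubleStar a b).adjMatrix ℝ ((dsEquiv a b) p) w)]
  simp only [adjM_eval]
  rcases p with i | ⟨i, hi⟩ | ⟨i, hi⟩ <;> try fin_cases i
  all_goals
    simp [Fintype.sum_sum_type, Fin.sum_univ_two, Boff, Finset.sum_const, nsmul_eq_mul,
      fromBlocks_apply₁₁, fromBlocks_apply₁₂, fromBlocks_apply₂₁, fromBlocks_apply₂₂]
  all_goals try ring

lemma reindex_lap (a b : ℕ) :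
    (Matrix.reindex (dsEquiv a b).symm (dsEquiv a b).symm ((doubleStar a b).lapMatrix ℝ)) =
      fromBlocks !![(a : ℝ) + 1, -1; -1, (b : ℝ) + 1] (-(Boff a b)) (-(Boff a b)ᵀ) 1 := by
  ext p q
  rw [Matrix.reindex_apply, Matrix.submatrix_apply, Equiv.symm_symm]
  rw [SimpleGraph.lapMatrix, Matrix.sub_apply, adjM_eval]
  rw [show (doubleStar a b).degMatrix ℝ =
    Matrix.diagonal (fun v => ((doubleStar a b).degree v : ℝ)) from rfl]
  rw [Matrix.diagonal_apply]
  rcases p with i | ⟨i, hi⟩ | ⟨i, hi⟩ <;> try fin_cases i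
  all_goals rcases q with j | ⟨j, hj⟩ | ⟨j, hj⟩ <;> try fin_cases j
  all_goals
    simp only [EmbeddingLike.apply_eq_iff_eq, deg_eval, Sum.elim_inl, Sum.elim_inr,
      Sum.inl.injEq, Sum.inr.injEq, Fin.mk.injEq,
      fromBlocks_apply₁₁, fromBlocks_apply₁₂, fromBlocks_apply₂₁, fromBlocks_apply₂₂,
      Boff, Matrix.of_apply, Matrix.transpose_apply, Matrix.zero_apply, Matrix.neg_apply,
      Matrix.one_apply, Fin.isValue, Matrix.cons_val', Matrix.cons_val_zero,
      Matrix.cons_val_one, Matrix.head_cons, Matrix.empty_val', Matrix.cons_val_fin_one,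
      Matrix.head_fin_const]
  all_goals split_ifs
  all_goals try rfl
  all_goals try (exfalso; omega)
  all_goals try norm_num
  all_goals simp_all
  all_goals omega

/-- The second-kind block over the rational function field. -/
noncomputable def BF (a b : ℕ) : Matrix (Fin 2) (Fin a ⊕ Fin b) (RatFunc ℝ) :=
  Matrix.of fun p q =>
    Sum.elim (fun _ => if p = 0 then (1 : RatFunc ℝ) else 0)
      (fun _ => if p = 1 then (1 : RatFunc ℝ) else 0) q

noncomputable abbrev φR : ℝ[X] →+* RatFunc ℝ := (algebraMap ℝ[X] (RatFunc ℝ) : ℝ[X] →+* RatFunc ℝ)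

lemma φR_inj : Function.Injective (φR) := IsFractionRing.injective _ _

lemma charpoly_blocks (a b : ℕ) (Boff' : Matrix (Fin 2) (Fin a ⊕ Fin b) ℝ)
    (hBoff : Boff' = Matrix.of fun p q =>
      Sum.elim (fun _ => if p = 0 then (1 : ℝ) else 0) (fun _ => if p = 1 then (1 : ℝ) else 0) q)
    (hab2 : 2 ≤ a + b) :
    (fromBlocks !![(a : ℝ) + 1, -1; -1, (b : ℝ) + 1] (-Boff') (-Boff'ᵀ) 1).charpoly =
      (X - C 1) ^ (a + b - 2) *
        (X * (X ^ 3 - C ((a : ℝ) + b + 4) * X ^ 2 + C ((a : ℝ) * b + 2 * a + 2 * b + 5) * X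
          - C ((a : ℝ) + b + 2))) := by
  obtain ⟨m, hm⟩ : ∃ m, a + b = m + 2 := ⟨a + b - 2, by omega⟩
  have hm' : a + b - 2 = m := by omega
  apply φR_inj
  rw [Matrix.charpoly, Matrix.charmatrix_fromBlocks, RingHom.map_det, RingHom.mapMatrix_apply,
    Matrix.fromBlocks_map]
  set t : RatFunc ℝ := φR X with ht
  have h1 : (t - 1 : RatFunc ℝ) ≠ 0 := by
    have hX : (X - 1 : ℝ[X]) ≠ 0 := by
      have : (X - 1 : ℝ[X]) = X - C 1 := by simp
      rw [this]
      exact X_sub_C_ne_zero 1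
    have h2 := (map_ne_zero_iff (φR) φR_inj).mpr hX
    simpa [map_sub, _root_.map_one, ht] using h2
  have hA : (charmatrix !![(a : ℝ) + 1, -1; -1, (b : ℝ) + 1]).map φR =
      !![t - ((a : RatFunc ℝ) + 1), 1; 1, t - ((b : RatFunc ℝ) + 1)] := by
    ext i j
    fin_cases i <;> fin_cases j <;>
      simp [charmatrix_apply_eq, charmatrix_apply_ne, map_sub, map_add, _root_.map_one,
        Polynomial.C_eq_natCast, map_natCast, ht]
  have hB : ((-((-Boff').map C)).map φR) = BF a b := by
    subst hBoff
    ext p q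
    rcases q with q | q <;> fin_cases p <;>
      simp [BF, apply_ite (φR), _root_.map_one, _root_.map_zero]
  have hC : ((-((-Boff'ᵀ).map C)).map φR) = (BF a b)ᵀ := by
    subst hBoff
    ext q p
    rcases q with q | q <;> fin_cases p <;>
      simp [BF, apply_ite (φR), _root_.map_one, _root_.map_zero]
  have hD : (charmatrix (1 : Matrix (Fin a ⊕ Fin b) (Fin a ⊕ Fin b) ℝ)).map φR =
      (t - 1) • (1 : Matrix (Fin a ⊕ Fin b) (Fin a ⊕ Fin b) (RatFunc ℝ)) := by
    ext i j
    by_cases h : i = j <;>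
      simp [h, charmatrix_apply_eq, charmatrix_apply_ne, Matrix.one_apply, map_sub,
        _root_.map_one, ht]
  rw [hA, hB, hC, hD]
  have hIr : ((t - 1)⁻¹ • (1 : Matrix (Fin a ⊕ Fin b) (Fin a ⊕ Fin b) (RatFunc ℝ)))
      * ((t - 1) • 1) = 1 := by
    simp [smul_smul, inv_mul_cancel₀ h1, mul_inv_cancel₀ h1]
  have hIl : ((t - 1) • (1 : Matrix (Fin a ⊕ Fin b) (Fin a ⊕ Fin b) (RatFunc ℝ)))
      * ((t - 1)⁻¹ • 1) = 1 := by
    simp [smul_smul, inv_mul_cancel₀ h1, mul_inv_cancel₀ h1]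
  letI : Invertible ((t - 1) • (1 : Matrix (Fin a ⊕ Fin b) (Fin a ⊕ Fin b) (RatFunc ℝ))) :=
    ⟨_, hIr, hIl⟩
  have hInv : ⅟((t - 1) • (1 : Matrix (Fin a ⊕ Fin b) (Fin a ⊕ Fin b) (RatFunc ℝ))) =
      (t - 1)⁻¹ • 1 := rfl
  rw [Matrix.det_fromBlocks₂₂, hInv]
  have hdetD : ((t - 1) • (1 : Matrix (Fin a ⊕ Fin b) (Fin a ⊕ Fin b) (RatFunc ℝ))).det =
      (t - 1) ^ (a + b) := by
    simp [Matrix.det_smul, Fintype.card_sum]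
  have hBB : BF a b * (BF a b)ᵀ = !![(a : RatFunc ℝ), 0; 0, (b : RatFunc ℝ)] := by
    ext i j
    fin_cases i <;> fin_cases j <;>
      simp [BF, Matrix.mul_apply, Fintype.sum_sum_type]
  have hSchur : (!![t - ((a : RatFunc ℝ) + 1), 1; 1, t - ((b : RatFunc ℝ) + 1)] -
      BF a b * ((t - 1)⁻¹ • (1 : Matrix (Fin a ⊕ Fin b) (Fin a ⊕ Fin b) (RatFunc ℝ)))
        * (BF a b)ᵀ) =
      !![t - ((a : RatFunc ℝ) + 1) - (t - 1)⁻¹ * a, 1;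
         1, t - ((b : RatFunc ℝ) + 1) - (t - 1)⁻¹ * b] := by
    have hmm : BF a b * ((t - 1)⁻¹ • (1 : Matrix (Fin a ⊕ Fin b) (Fin a ⊕ Fin b) (RatFunc ℝ)))
        * (BF a b)ᵀ = (t - 1)⁻¹ • (BF a b * (BF a b)ᵀ) := by
      rw [Matrix.mul_smul, Matrix.mul_one, Matrix.smul_mul]
    rw [hmm, hBB]
    ext i j
    fin_cases i <;> fin_cases j <;> simp [Matrix.smul_apply] <;> ring
  rw [hSchur, hdetD, Matrix.det_fin_two_of]
  rw [hm', hm]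
  simp only [_root_.map_mul, map_pow, _root_.map_sub, _root_.map_add, _root_.map_one,
    map_natCast, map_ofNat, ← ht]
  field_simp
  ring

lemma charpoly_ds (a b : ℕ) (hab2 : 2 ≤ a + b) :
    ((doubleStar a b).lapMatrix ℝ).charpoly =
      (X - C 1) ^ (a + b - 2) *
        (X * (X ^ 3 - C ((a : ℝ) + b + 4) * X ^ 2 + C ((a : ℝ) * b + 2 * a + 2 * b + 5) * X
          - C ((a : ℝ) + b + 2))) := by
  rw [← Matrix.charpoly_reindex (dsEquiv a b).symm ((doubleStar a b).lapMatrix ℝ), reindex_lap]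
  exact charpoly_blocks a b (Boff a b) rfl hab2

lemma p_monic (a b : ℕ) :
    (X ^ 3 - C ((a : ℝ) + b + 4) * X ^ 2 + C ((a : ℝ) * b + 2 * a + 2 * b + 5) * X
      - C ((a : ℝ) + b + 2)).Monic := by
  have hdeg : (X ^ 3 - C ((a : ℝ) + b + 4) * X ^ 2 + C ((a : ℝ) * b + 2 * a + 2 * b + 5) * X
      - C ((a : ℝ) + b + 2)).natDegree = 3 := by compute_degree!
  unfold Polynomial.Monic Polynomial.leadingCoeff
  rw [hdeg]
  simp only [coeff_sub, coeff_add, coeff_C_mul, coeff_X_pow, coeff_C, coeff_X]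
  norm_num

lemma lapSpectrum_ds (a b : ℕ) (hab2 : 2 ≤ a + b) (y1 y2 y3 : ℝ)
    (hroots : (X ^ 3 - C ((a : ℝ) + b + 4) * X ^ 2 + C ((a : ℝ) * b + 2 * a + 2 * b + 5) * X
        - C ((a : ℝ) + b + 2)).roots = {y1, y2, y3}) :
    lapSpectrum (doubleStar a b) =
      Multiset.replicate (a + b - 2) 1 + (0 ::ₘ y1 ::ₘ y2 ::ₘ {y3}) := by
  have hpm := p_monic a b
  rw [lapSpectrum, charpoly_ds a b hab2]
  rw [Polynomial.roots_mul (mul_ne_zero (pow_ne_zero _ (X_sub_C_ne_zero 1))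
    (mul_ne_zero X_ne_zero hpm.ne_zero))]
  rw [Polynomial.roots_pow, Polynomial.roots_X_sub_C]
  rw [Polynomial.roots_mul (mul_ne_zero X_ne_zero hpm.ne_zero)]
  rw [Polynomial.roots_X, hroots]
  rw [Multiset.nsmul_singleton]
  simp only [Multiset.insert_eq_cons, Multiset.singleton_add]
  try simp only [← Multiset.singleton_add]
  try abel

lemma cubic_facts {a b : ℕ} {y1 y2 y3 : ℝ} (ha : 1 ≤ a) (hb : 1 ≤ b)
    (h12 : y2 ≤ y1) (h23 : y3 ≤ y2)
    (hroots : (X ^ 3 - C ((a : ℝ) + b + 4) * X ^ 2 + C ((a : ℝ) * b + 2 * a + 2 * b + 5) * X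
        - C ((a : ℝ) + b + 2)).roots = {y1, y2, y3}) :
    y1 + y2 + y3 = (a : ℝ) + b + 4 ∧ y3 < 1 ∧ 2 ≤ y2 ∧ 0 < y3 := by
  set p : ℝ[X] := X ^ 3 - C ((a : ℝ) + b + 4) * X ^ 2 + C ((a : ℝ) * b + 2 * a + 2 * b + 5) * X
      - C ((a : ℝ) + b + 2) with hp
  have hdeg : p.natDegree = 3 := by rw [hp]; compute_degree!
  have hpm : p.Monic := by
    unfold Polynomial.Monic Polynomial.leadingCoeff
    rw [hdeg]
    simp only [hp, coeff_sub, coeff_add, coeff_C_mul, coeff_X_pow, coeff_C, coeff_X]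
    norm_num
  have hcard : p.roots.card = 3 := by rw [hroots]; simp
  have hsplits : p.Splits := splits_iff_card_roots.mpr (by rw [hcard, hdeg])
  have hp_eq : p = (X - C y1) * ((X - C y2) * (X - C y3)) := by
    have h := hsplits.eq_prod_roots_of_monic hpm
    rw [hroots] at h
    simpa [Multiset.insert_eq_cons, mul_assoc] using h
  have heval : ∀ c : ℝ, (c - y1) * ((c - y2) * (c - y3)) =
      c ^ 3 - ((a : ℝ) + b + 4) * c ^ 2 + ((a : ℝ) * b + 2 * a + 2 * b + 5) * c
        - ((a : ℝ) + b + 2) := by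
    intro c
    have h := congrArg (eval c) hp_eq
    rw [hp] at h
    simp only [eval_mul, eval_sub, eval_add, eval_pow, eval_C, eval_X] at h
    linarith [h]
  have ha' : (1 : ℝ) ≤ a := by exact_mod_cast ha
  have hb' : (1 : ℝ) ≤ b := by exact_mod_cast hb
  -- sum of roots
  have hsum : y1 + y2 + y3 = (a : ℝ) + b + 4 := by
    have h := hsplits.nextCoeff_eq_neg_sum_roots_of_monic hpm
    rw [hroots] at h
    have hnc : p.nextCoeff = -((a : ℝ) + b + 4) := by
      rw [nextCoeff_of_natDegree_pos (by rw [hdeg]; norm_num), hdeg]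
      simp only [hp, coeff_sub, coeff_add, coeff_C_mul, coeff_X_pow, coeff_C, coeff_X]
      norm_num
    rw [hnc] at h
    have h2 : ({y1, y2, y3} : Multiset ℝ).sum = y1 + (y2 + y3) := by
      simp [Multiset.insert_eq_cons]
    rw [h2] at h
    linarith
  -- product of roots
  have hprod : y1 * (y2 * y3) = (a : ℝ) + b + 2 := by
    have h := hsplits.coeff_zero_eq_prod_roots_of_monic hpm
    rw [hroots, hdeg] at h
    have hc0 : p.coeff 0 = -((a : ℝ) + b + 2) := by
      simp only [hp, coeff_sub, coeff_add, coeff_C_mul, coeff_X_pow, coeff_C, coeff_X]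
      norm_num
    rw [hc0] at h
    have h2 : ({y1, y2, y3} : Multiset ℝ).prod = y1 * (y2 * y3) := by
      simp [Multiset.insert_eq_cons]
    rw [h2] at h
    nlinarith [h]
  have e1 : (1 - y1) * ((1 - y2) * (1 - y3)) = (a : ℝ) * b := by rw [heval 1]; ring
  have e2 : ((a : ℝ) + 2 - y1) * (((a : ℝ) + 2 - y2) * ((a : ℝ) + 2 - y3)) = -(b : ℝ) := by
    rw [heval ((a : ℝ) + 2)]; ring
  have e4 : (2 - y1) * ((2 - y2) * (2 - y3)) = 2 * ((a : ℝ) * b) - a - b := by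
    rw [heval 2]; ring
  have hy3 : y3 < 1 := by
    by_contra hc
    push_neg at hc
    have f1 : 1 - y1 ≤ 0 := by linarith
    have f2 : 1 - y2 ≤ 0 := by linarith
    have f3 : 1 - y3 ≤ 0 := by linarith
    nlinarith [mul_nonneg (neg_nonneg.mpr f2) (neg_nonneg.mpr f3)]
  have hy1 : (a : ℝ) + 2 < y1 := by
    by_contra hc
    push_neg at hc
    have f1 : 0 ≤ (a : ℝ) + 2 - y1 := by linarith
    have f2 : 0 ≤ (a : ℝ) + 2 - y2 := by linarith
    have f3 : 0 ≤ (a : ℝ) + 2 - y3 := by linarith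
    nlinarith [mul_nonneg f1 (mul_nonneg f2 f3)]
  have hy2 : 2 ≤ y2 := by
    by_contra hc
    push_neg at hc
    have f1 : 2 - y1 < 0 := by linarith
    have f2 : 0 < 2 - y2 := by linarith
    have f3 : 0 < 2 - y3 := by linarith
    nlinarith [mul_pos f2 f3, mul_neg_of_neg_of_pos f1 (mul_pos f2 f3)]
  have hy3pos : 0 < y3 := by
    have hy1p : 0 < y1 := by linarith
    have hy2p : 0 < y2 := by linarith
    nlinarith [mul_pos hy1p hy2p]
  exact ⟨hsum, hy3, hy2, hy3pos⟩


lemma sorted_replicate_one (m : ℕ) : (List.replicate m (1 : ℝ)).Pairwise (· ≤ ·) := by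
  induction m with
  | zero => simp
  | succ k ih =>
    rw [List.replicate_succ, List.pairwise_cons]
    exact ⟨fun b hb => le_of_eq (List.eq_of_mem_replicate hb).symm, ih⟩


/-- Let `a ≥ b ≥ 1`, `n = a + b + 2`, and let `y₁ ≥ y₂ ≥ y₃` be the real
roots of `p_{a,b}(x) = x³ - (a+b+4)x² + (ab+2a+2b+5)x - (a+b+2)`. Then the double star
`T(a,b)` has exactly `2` Laplacian eigenvalues strictly larger than its average degree
`2 - 2/n`, and `S₂(T(a,b)) = y₁ + y₂ = n + 2 - y₃`. -/
theorem doubleStar_sigma_and_S2 (a b : ℕ) (hab : b ≤ a) (hb : 1 ≤ b)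
    (n : ℕ) (hn : n = a + b + 2) (y1 y2 y3 : ℝ) (h12 : y2 ≤ y1) (h23 : y3 ≤ y2)
    (hroots : (X ^ 3 - C ((a : ℝ) + b + 4) * X ^ 2 + C ((a : ℝ) * b + 2 * a + 2 * b + 5) * X
        - C ((a : ℝ) + b + 2)).roots = {y1, y2, y3}) :
    Multiset.card ((lapSpectrum (doubleStar a b)).filter (fun x => 2 - 2 / (n : ℝ) < x)) = 2 ∧
      Sk (doubleStar a b) 2 = y1 + y2 ∧ y1 + y2 = (n : ℝ) + 2 - y3 := by
  have ha : 1 ≤ a := le_trans hb hab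
  have hab2 : 2 ≤ a + b := by omega
  obtain ⟨hsum, hy3lt1, hy2ge2, hy3pos⟩ := cubic_facts ha hb h12 h23 hroots
  have ha' : (1 : ℝ) ≤ a := by exact_mod_cast ha
  have hb' : (1 : ℝ) ≤ b := by exact_mod_cast hb
  subst hn
  have hcast : ((a + b + 2 : ℕ) : ℝ) = (a : ℝ) + b + 2 := by push_cast; ring
  have hspec := lapSpectrum_ds a b hab2 y1 y2 y3 hroots
  set c : ℝ := 2 - 2 / ((a + b + 2 : ℕ) : ℝ) with hcdef
  have hN4 : (4 : ℝ) ≤ ((a + b + 2 : ℕ) : ℝ) := by rw [hcast]; linarith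
  have hNpos : (0 : ℝ) < ((a + b + 2 : ℕ) : ℝ) := by linarith
  have hfrac_pos : 0 < 2 / ((a + b + 2 : ℕ) : ℝ) := by positivity
  have hfrac_le : 2 / ((a + b + 2 : ℕ) : ℝ) ≤ 2 / 4 := by
    rw [div_le_div_iff₀ hNpos (by norm_num)]
    linarith
  have hc1 : 1 < c := by rw [hcdef]; linarith
  have hc2 : c < 2 := by rw [hcdef]; linarith
  refine ⟨?_, ?_, by rw [hcast]; linarith⟩
  · rw [hspec, Multiset.filter_add]
    have hrep : Multiset.filter (fun x => c < x) (Multiset.replicate (a + b - 2) (1 : ℝ)) = 0 :=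
      Multiset.filter_eq_nil.mpr (fun x hx => by
        rw [Multiset.eq_of_mem_replicate hx]; exact not_lt.mpr hc1.le)
    rw [hrep, Multiset.filter_cons_of_neg _ (not_lt.mpr (by linarith : (0 : ℝ) ≤ c)),
      Multiset.filter_cons_of_pos _ (by linarith : c < y1),
      Multiset.filter_cons_of_pos _ (by linarith : c < y2),
      Multiset.filter_singleton, if_neg (not_lt.mpr (by linarith : y3 ≤ c))]
    simp
  · have hcoe : ((0 :: y3 :: (List.replicate (a + b - 2) 1 ++ [y2, y1]) : List ℝ) : Multiset ℝ)
        = lapSpectrum (doubleStar a b) := by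
      rw [hspec]
      try simp only [← Multiset.cons_coe]
      try simp only [← Multiset.coe_add]
      try simp only [Multiset.coe_replicate]
      try simp only [← Multiset.cons_coe]
      try simp only [Multiset.coe_nil]
      try simp only [← Multiset.singleton_add]
      try simp only [add_zero]
      abel
    have hperm : List.Perm ((lapSpectrum (doubleStar a b)).sort (· ≤ ·))
        (0 :: y3 :: (List.replicate (a + b - 2) 1 ++ [y2, y1])) :=
      Multiset.coe_eq_coe.mp (by rw [Multiset.sort_eq, hcoe])
    have hsingle : ([y2, y1] : List ℝ).Pairwise (· ≤ ·) := by
      rw [List.pairwise_cons]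
      refine ⟨fun y hy => ?_, List.pairwise_singleton _ _⟩
      simp only [List.mem_singleton] at hy
      linarith [hy.le]
    have hsorted2 : (0 :: y3 :: (List.replicate (a + b - 2) 1 ++ [y2, y1])).Pairwise (· ≤ ·) := by
      rw [List.pairwise_cons, List.pairwise_cons]
      refine ⟨?_, ?_, List.pairwise_append.mpr ⟨sorted_replicate_one _, hsingle, ?_⟩⟩
      · intro x hx
        rcases List.mem_cons.mp hx with rfl | hx
        · linarith
        · rcases List.mem_append.mp hx with hx | hx
          · rw [List.eq_of_mem_replicate hx]; linarith
          · simp only [List.mem_cons, List.mem_singleton, List.not_mem_nil] at hx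
            rcases hx with rfl | rfl | h
            · linarith
            · linarith
            · exact absurd h (by simp)
      · intro x hx
        rcases List.mem_append.mp hx with hx | hx
        · rw [List.eq_of_mem_replicate hx]; linarith
        · simp only [List.mem_cons, List.mem_singleton, List.not_mem_nil] at hx
          rcases hx with rfl | rfl | h
          · linarith
          · linarith
          · exact absurd h (by simp)
      · intro x hx y hy
        rw [List.eq_of_mem_replicate hx]
        simp only [List.mem_cons, List.mem_singleton, List.not_mem_nil] at hy
        rcases hy with rfl | rfl | h
        · linarith
        · linarith
        · exact absurd h (by simp)
    have hlist := List.Perm.eq_of_pairwise' (Multiset.pairwise_sort _ _) hsorted2 hperm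
    unfold Sk
    rw [hlist]
    rw [List.reverse_cons, List.reverse_cons, List.reverse_append]
    simp [List.take, List.append_assoc]

end LapPaper
end

section
/- Let T be a tree with n vertices and let σ be the number of Laplacian eigenvalues of T that are strictly larger than the average degree d̄ = 2 − 2/n. If the inequality S_k(T) < n − 2 + 2k − 2k/n holds for k = σ, then it holds for every integer k with 1 ≤ k ≤ n. -/
open Polynomial

namespace LapPaper

/-- charpoly is invariant under unitary conjugation. -/
lemma charpoly_unitary_conj {m : Type} [Fintype m] [DecidableEq m]
    (U D : Matrix m m ℝ) (h1 : U * star U = 1) (h2 : star U * U = 1) :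
    (U * D * star U).charpoly = D.charpoly := by
  classical
  have hmap : ∀ (A B : Matrix m m ℝ), (A * B).map (C : ℝ →+* ℝ[X]) = A.map C * B.map C := by
    intro A B
    exact Matrix.map_mul
  have key : Matrix.charmatrix (U * D * star U)
      = (U.map (C : ℝ →+* ℝ[X])) * Matrix.charmatrix D * ((star U).map (C : ℝ →+* ℝ[X])) := by
    rw [Matrix.charmatrix, Matrix.charmatrix, RingHom.mapMatrix_apply, RingHom.mapMatrix_apply]
    rw [Matrix.mul_sub, Matrix.sub_mul]
    congr 1
    · symm
      have hc : Commute (Matrix.scalar m (X : ℝ[X])) ((star U).map (C : ℝ →+* ℝ[X])) :=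
        Matrix.scalar_commute _ (fun r' => Polynomial.commute_X r') _
      calc U.map (C : ℝ →+* ℝ[X]) * Matrix.scalar m (X : ℝ[X]) * (star U).map C
          = U.map (C : ℝ →+* ℝ[X]) * ((star U).map C) * Matrix.scalar m (X : ℝ[X]) := by
            rw [mul_assoc, hc.eq, mul_assoc]
        _ = Matrix.scalar m (X : ℝ[X]) := by
            rw [← hmap, h1, Matrix.map_one _ (map_zero _) (map_one _), one_mul]
    · rw [← hmap, ← hmap]
  rw [Matrix.charpoly, Matrix.charpoly, key, Matrix.det_mul, Matrix.det_mul,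
    mul_comm ((U.map (C : ℝ →+* ℝ[X])).det), mul_assoc, ← Matrix.det_mul, ← hmap, h1,
    Matrix.map_one _ (map_zero _) (map_one _), Matrix.det_one, mul_one]

lemma card_roots_charpoly {m : Type} [Fintype m] [DecidableEq m]
    (A : Matrix m m ℝ) (hA : A.IsHermitian) :
    Multiset.card A.charpoly.roots = Fintype.card m := by
  classical
  have hsp := hA.spectral_theorem
  set U : Matrix m m ℝ := (hA.eigenvectorUnitary : Matrix m m ℝ) with hU
  have h1 : U * star U = 1 := Matrix.mem_unitaryGroup_iff.mp hA.eigenvectorUnitary.2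
  have h2 : star U * U = 1 := Matrix.mem_unitaryGroup_iff'.mp hA.eigenvectorUnitary.2
  set f : m → ℝ := RCLike.ofReal ∘ hA.eigenvalues with hf
  have hcp : A.charpoly = (Matrix.diagonal f).charpoly := by
    rw [hsp]
    exact charpoly_unitary_conj _ _ h1 h2
  have hdcp : (Matrix.diagonal f).charpoly
      = ((Finset.univ.val.map f).map fun a => X - Polynomial.C a).prod := by
    rw [Matrix.charpoly]
    have hm : Matrix.charmatrix (Matrix.diagonal f)
        = Matrix.diagonal (fun i => (X : ℝ[X]) - Polynomial.C (f i)) := by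
      apply Matrix.ext
      intro i j
      by_cases h : i = j
      · subst h; simp [Matrix.charmatrix_apply_eq]
      · simp [Matrix.charmatrix_apply_ne _ _ _ h, Matrix.diagonal_apply_ne _ h]
    rw [hm, Matrix.det_diagonal, Multiset.map_map]
    rfl
  rw [hcp, hdcp, Polynomial.roots_multiset_prod_X_sub_C, Multiset.card_map]
  rfl

lemma countP_index {c : ℝ} : ∀ {l : List ℝ}, l.Pairwise (· ≥ ·) →
    ∀ i (hi : i < l.length),
      (c < l.get ⟨i, hi⟩ ↔ i < l.countP (fun x => decide (c < x))) := by
  intro l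
  induction l with
  | nil => intro _ i hi; simp at hi
  | cons a t ih =>
    intro hp i hi
    rw [List.pairwise_cons] at hp
    by_cases hc : c < a
    · have hcount : (a :: t).countP (fun x => decide (c < x))
          = t.countP (fun x => decide (c < x)) + 1 := by
        rw [List.countP_cons]
        simp [hc]
      cases i with
      | zero => simpa [hcount] using hc
      | succ j =>
        have hj : j < t.length := by simpa using hi
        have := ih hp.2 j hj
        simp only [List.get_cons_succ, hcount]
        rw [this]
        omega
    · have hall : ∀ x ∈ a :: t, ¬ c < x := by
        intro x hx
        rcases List.mem_cons.mp hx with h | h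
        · subst h; exact hc
        · intro hcx; exact hc (lt_of_lt_of_le hcx (hp.1 x h))
      have hcount : (a :: t).countP (fun x => decide (c < x)) = 0 := by
        rw [List.countP_eq_zero]
        intro x hx
        simpa using hall x hx
      rw [hcount]
      simp only [Nat.not_lt_zero, iff_false]
      exact hall _ (List.get_mem _ _)

/-- Let `T` be a tree with `n` vertices and let `σ` be the number of
Laplacian eigenvalues of `T` strictly larger than the average degree `d̄ = 2 - 2/n`.
If `S_k(T) < n - 2 + 2k - 2k/n` holds for `k = σ`, then it holds for all `1 ≤ k ≤ n`. -/
theorem Sk_lt_of_S_sigma_lt {V : Type} [Fintype V] [DecidableEq V]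
    (T : SimpleGraph V) [DecidableRel T.Adj] (n : ℕ) (hcard : Fintype.card V = n)
    (hT : T.IsTree) (σ : ℕ)
    (hσ : σ = Multiset.card ((lapSpectrum T).filter (fun x => 2 - 2 / (n : ℝ) < x)))
    (hS : Sk T σ < (n : ℝ) - 2 + 2 * σ - 2 * σ / n) :
    ∀ k : ℕ, 1 ≤ k → k ≤ n → Sk T k < (n : ℝ) - 2 + 2 * k - 2 * k / n := by
  classical
  intro k hk1 hkn
  set c : ℝ := 2 - 2 / (n : ℝ) with hc
  set l : List ℝ := ((lapSpectrum T).sort (· ≤ ·)).reverse with hl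
  have hcoe : (l : Multiset ℝ) = lapSpectrum T := by
    rw [hl, ← Multiset.coe_reverse, Multiset.coe_reverse, Multiset.coe_reverse,
      Multiset.sort_eq]
  have hlen : l.length = n := by
    have h1 : Multiset.card (l : Multiset ℝ) = l.length := rfl
    rw [← h1, hcoe, ← hcard]
    exact card_roots_charpoly _ (T.posSemidef_lapMatrix (R := ℝ)).1
  have hsorted : l.Pairwise (· ≥ ·) := by
    rw [hl]
    exact List.pairwise_reverse.mpr (Multiset.pairwise_sort (lapSpectrum T) (· ≤ ·))
  have hσcount : σ = l.countP (fun x => decide (c < x)) := by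
    rw [hσ, ← hcoe, ← Multiset.countP_eq_card_filter, Multiset.coe_countP]
  have hσn : σ ≤ n := by
    rw [hσcount, ← hlen]
    exact l.countP_le_length
  have hidx : ∀ i (hi : i < l.length), (c < l.get ⟨i, hi⟩ ↔ i < σ) := by
    intro i hi
    rw [hσcount]
    exact countP_index hsorted i hi
  have hSk : ∀ j : ℕ, Sk T j = (l.take j).sum := fun j => rfl
  have hstep : ∀ j (hj : j < n), (l.take (j + 1)).sum
      = (l.take j).sum + l.get ⟨j, by rw [hlen]; exact hj⟩ := by
    intro j hj
    exact List.sum_take_succ _ _ _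
  have up : ∀ j : ℕ, σ + j ≤ n →
      (l.take (σ + j)).sum - (σ + j : ℕ) * c ≤ (l.take σ).sum - (σ : ℕ) * c := by
    intro j
    induction j with
    | zero => intro _; simp
    | succ m ihm =>
      intro hmn
      have hmn' : σ + m < n := by omega
      have hi : σ + m < l.length := by rw [hlen]; exact hmn'
      have hle : l.get ⟨σ + m, hi⟩ ≤ c := by
        by_contra hcon
        push_neg at hcon
        have := (hidx (σ + m) hi).mp hcon
        omega
      have hsum := hstep (σ + m) hmn'
      have hih := ihm (le_of_lt hmn')
      have hcast : ((σ + (m + 1) : ℕ) : ℝ) = ((σ + m : ℕ) : ℝ) + 1 := by push_cast; ring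
      have heq : σ + (m + 1) = (σ + m) + 1 := by omega
      rw [heq, hsum]
      have : ((σ + m + 1 : ℕ) : ℝ) = ((σ + m : ℕ) : ℝ) + 1 := by push_cast; ring
      rw [this]
      linarith
  have down : ∀ j : ℕ, j ≤ σ →
      (l.take (σ - j)).sum - (σ - j : ℕ) * c ≤ (l.take σ).sum - (σ : ℕ) * c := by
    intro j
    induction j with
    | zero => intro _; simp
    | succ m ihm =>
      intro hmσ
      have hi : σ - (m + 1) < l.length := by rw [hlen]; omega
      have hgt : c < l.get ⟨σ - (m + 1), hi⟩ := (hidx _ hi).mpr (by omega)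
      have hsum := hstep (σ - (m + 1)) (by rw [← hlen]; omega)
      have heq : σ - (m + 1) + 1 = σ - m := by omega
      rw [heq] at hsum
      have hih := ihm (by omega)
      have hcast : ((σ - m : ℕ) : ℝ) = ((σ - (m + 1) : ℕ) : ℝ) + 1 := by
        rw [← heq]; push_cast; ring
      rw [hsum, hcast] at hih
      linarith
  have key : (l.take k).sum - (k : ℕ) * c ≤ (l.take σ).sum - (σ : ℕ) * c := by
    rcases le_or_gt k σ with h | h
    · have := down (σ - k) (by omega)
      rwa [show σ - (σ - k) = k from by omega] at this
    · have := up (k - σ) (by omega)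
      rwa [show σ + (k - σ) = k from by omega] at this
  have hc1 : (σ : ℝ) * c = 2 * σ - 2 * σ / n := by rw [hc]; ring
  have hc2 : (k : ℝ) * c = 2 * k - 2 * k / n := by rw [hc]; ring
  rw [hSk σ] at hS
  rw [hSk k]
  have hkey2 : (l.take k).sum ≤ (l.take σ).sum - (2 * σ - 2 * σ / n) + (2 * k - 2 * k / n) := by
    rw [← hc1, ← hc2]
    linarith
  linarith

end LapPaper
end

section
/- (Wielandt) Let A, B, C be Hermitian matrices of order n such that A = B + C, and for a Hermitian matrix M let λ_1(M) ≥ λ_2(M) ≥ ⋯ ≥ λ_n(M) denote its eigenvalues in nonincreasing order. Then for every subset I ⊆ {1, 2, …, n}, ∑_{i ∈ I} λ_i(A) ≤ ∑_{i=1}^{|I|} λ_i(B) + ∑_{i ∈ I} λ_i(C). -/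
namespace LapPaper
open scoped InnerProductSpace ComplexOrder
open Matrix Polynomial


variable {E : Type*} [NormedAddCommGroup E] [InnerProductSpace ℂ E]


variable {E : Type*} [NormedAddCommGroup E] [InnerProductSpace ℂ E]

lemma rayleigh_eq {n : ℕ} (T : E →ₗ[ℂ] E) (v : OrthonormalBasis (Fin n) ℂ E) (e : Fin n → ℝ)
    (hv : ∀ j, T (v j) = (e j : ℂ) • v j) (x : E) :
    Complex.re ⟪x, T x⟫_ℂ = ∑ j, e j * ‖⟪v j, x⟫_ℂ‖ ^ 2 := by
  have hTx : T x = ∑ j, (⟪v j, x⟫_ℂ * (e j : ℂ)) • v j := by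
    conv_lhs => rw [← v.sum_repr' x]
    rw [map_sum]
    simp only [_root_.map_smul, hv, smul_smul]
  have h2 : ⟪x, T x⟫_ℂ = ∑ j, (⟪v j, x⟫_ℂ * (e j : ℂ)) * (starRingEnd ℂ) ⟪v j, x⟫_ℂ := by
    rw [hTx, inner_sum]
    simp only [inner_smul_right, inner_conj_symm]
  rw [h2, Complex.re_sum]
  refine Finset.sum_congr rfl fun j _ => ?_
  have : (⟪v j, x⟫_ℂ * (e j : ℂ)) * (starRingEnd ℂ) ⟪v j, x⟫_ℂ
      = (e j : ℂ) * ((Complex.normSq ⟪v j, x⟫_ℂ : ℝ) : ℂ) := by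
    rw [← Complex.mul_conj]; ring
  rw [this]
  simp [Complex.normSq_eq_norm_sq, ← Complex.ofReal_pow]

lemma parseval {n : ℕ} (v : OrthonormalBasis (Fin n) ℂ E) (x : E) :
    ∑ j, ‖⟪v j, x⟫_ℂ‖ ^ 2 = ‖x‖ ^ 2 := by
  have := rayleigh_eq (LinearMap.id : E →ₗ[ℂ] E) v (fun _ => 1) (fun j => by simp) x
  simp only [LinearMap.id_apply, one_mul] at this
  rw [← this]
  simpa [RCLike.re_to_complex] using (InnerProductSpace.norm_sq_eq_re_inner (𝕜 := ℂ) x).symm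

lemma weyl {n : ℕ} {P Q : Matrix (Fin n) (Fin n) ℂ}
    (hPQ : (Q - P).PosSemidef)
    {p q ep eq' : Fin n → ℝ} (hp : Antitone p) (hq : Antitone q)
    (v w : OrthonormalBasis (Fin n) ℂ (EuclideanSpace ℂ (Fin n)))
    (hv : ∀ j, Matrix.toEuclideanLin P (v j) = (ep j : ℂ) • v j)
    (hw : ∀ j, Matrix.toEuclideanLin Q (w j) = (eq' j : ℂ) • w j)
    (hpe : Multiset.map ep Finset.univ.val = Multiset.map p Finset.univ.val)
    (hqe : Multiset.map eq' Finset.univ.val = Multiset.map q Finset.univ.val)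
    (i : Fin n) : p i ≤ q i := by
  classical
  set S : Finset (Fin n) := Finset.univ.filter (fun j => p i ≤ ep j) with hSdef
  set T : Finset (Fin n) := Finset.univ.filter (fun j => eq' j ≤ q i) with hTdef
  -- cardinality bounds
  have cardS : i.1 + 1 ≤ S.card := by
    have h1 : S.card = Multiset.countP (fun x => p i ≤ x) (Multiset.map ep Finset.univ.val) := by
      rw [Multiset.countP_map]
      rfl
    have h2 : Multiset.countP (fun x => p i ≤ x) (Multiset.map p Finset.univ.val)
        = (Finset.univ.filter (fun j => p i ≤ p j)).card := by
      rw [Multiset.countP_map]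
      rfl
    rw [h1, hpe, h2]
    calc i.1 + 1 = (Finset.Iic i).card := (Fin.card_Iic i).symm
      _ ≤ _ := Finset.card_le_card (fun j hj => by
          simp only [Finset.mem_filter, Finset.mem_univ, true_and]
          exact hp (Finset.mem_Iic.mp hj))
  have cardT : n - i.1 ≤ T.card := by
    have h1 : T.card = Multiset.countP (fun x => x ≤ q i) (Multiset.map eq' Finset.univ.val) := by
      rw [Multiset.countP_map]
      rfl
    have h2 : Multiset.countP (fun x => x ≤ q i) (Multiset.map q Finset.univ.val)
        = (Finset.univ.filter (fun j => q j ≤ q i)).card := by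
      rw [Multiset.countP_map]
      rfl
    rw [h1, hqe, h2]
    calc n - i.1 = (Finset.Ici i).card := (Fin.card_Ici i).symm
      _ ≤ _ := Finset.card_le_card (fun j hj => by
          simp only [Finset.mem_filter, Finset.mem_univ, true_and]
          exact hq (Finset.mem_Ici.mp hj))
  -- the kernel argument
  set f : EuclideanSpace ℂ (Fin n) →ₗ[ℂ] ((↥(Sᶜ) → ℂ) × (↥(Tᶜ) → ℂ)) :=
    LinearMap.prod
      (LinearMap.pi fun j : ↥(Sᶜ) => ((innerSL ℂ (v j.1)).toLinearMap))
      (LinearMap.pi fun j : ↥(Tᶜ) => ((innerSL ℂ (w j.1)).toLinearMap)) with hfdef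
  have hrank : Module.finrank ℂ ((↥(Sᶜ) → ℂ) × (↥(Tᶜ) → ℂ))
      < Module.finrank ℂ (EuclideanSpace ℂ (Fin n)) := by
    rw [Module.finrank_prod, Module.finrank_pi, Module.finrank_pi, finrank_euclideanSpace_fin,
      Fintype.card_coe, Fintype.card_coe, Finset.card_compl, Finset.card_compl,
      Fintype.card_fin]
    have hi : i.1 < n := i.2
    have hS' : S.card ≤ n := le_trans (Finset.card_le_card (Finset.subset_univ S))
      (le_of_eq (Finset.card_univ.trans (Fintype.card_fin n)))
    omega
  have hninj : ¬ Function.Injective f := by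
    intro h
    exact absurd (LinearMap.finrank_le_finrank_of_injective h) (not_le.mpr hrank)
  rw [← LinearMap.ker_eq_bot] at hninj
  obtain ⟨x, hxker, hx0⟩ := Submodule.exists_mem_ne_zero_of_ne_bot hninj
  have hfx : f x = 0 := hxker
  have hvS : ∀ j, j ∉ S → ⟪v j, x⟫_ℂ = 0 := by
    intro j hj
    have := congrFun (congrArg Prod.fst hfx) ⟨j, Finset.mem_compl.mpr hj⟩
    simpa [f] using this
  have hwT : ∀ j, j ∉ T → ⟪w j, x⟫_ℂ = 0 := by
    intro j hj
    have := congrFun (congrArg Prod.snd hfx) ⟨j, Finset.mem_compl.mpr hj⟩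
    simpa [f] using this
  -- Rayleigh bounds
  have hPx : p i * ‖x‖ ^ 2 ≤ Complex.re ⟪x, Matrix.toEuclideanLin P x⟫_ℂ := by
    rw [rayleigh_eq _ v ep hv x, ← parseval v x, Finset.mul_sum]
    refine Finset.sum_le_sum fun j _ => ?_
    by_cases hj : j ∈ S
    · exact mul_le_mul_of_nonneg_right
        ((Finset.mem_filter.mp hj).2) (by positivity)
    · rw [hvS j hj]
      simp
  have hQx : Complex.re ⟪x, Matrix.toEuclideanLin Q x⟫_ℂ ≤ q i * ‖x‖ ^ 2 := by
    rw [rayleigh_eq _ w eq' hw x, ← parseval w x, Finset.mul_sum]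
    refine Finset.sum_le_sum fun j _ => ?_
    by_cases hj : j ∈ T
    · exact mul_le_mul_of_nonneg_right
        ((Finset.mem_filter.mp hj).2) (by positivity)
    · rw [hwT j hj]
      simp
  have hmid : Complex.re ⟪x, Matrix.toEuclideanLin P x⟫_ℂ
      ≤ Complex.re ⟪x, Matrix.toEuclideanLin Q x⟫_ℂ := by
    have h0 := hPQ.re_dotProduct_nonneg (WithLp.equiv 2 _ x)
    have heq : dotProduct (star (WithLp.equiv 2 _ x)) ((Q - P) *ᵥ (WithLp.equiv 2 _ x))
        = ⟪x, Matrix.toEuclideanLin Q x⟫_ℂ - ⟪x, Matrix.toEuclideanLin P x⟫_ℂ := by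
      rw [Matrix.sub_mulVec, dotProduct_sub]
      rw [dotProduct_comm (star _) (Q *ᵥ _), dotProduct_comm (star _) (P *ᵥ _)]
      rfl
    rw [heq] at h0
    simp only [RCLike.re_to_complex, Complex.sub_re] at h0
    linarith
  have hx2 : 0 < ‖x‖ ^ 2 := pow_pos (norm_pos_iff.mpr hx0) 2
  have := le_trans hPx (le_trans hmid hQx)
  exact le_of_mul_le_mul_right (by linarith [this]) hx2




lemma charpoly_conj_units {n : ℕ} (U D V : Matrix (Fin n) (Fin n) ℂ) (hUV : U * V = 1) :
    (U * D * V).charpoly = D.charpoly := by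
  have hcomm : Commute ((scalar (Fin n)) (X : ℂ[X])) (U.map ⇑C) :=
    scalar_commute _ (fun r => Commute.all _ _) _
  have key : charmatrix (U * D * V) =
      U.map ⇑C * charmatrix D * V.map ⇑C := by
    simp only [charmatrix, mul_sub, sub_mul, RingHom.mapMatrix_apply, ← Matrix.map_mul]
    congr 1
    · rw [← hcomm.eq, Matrix.mul_assoc, ← Matrix.map_mul, hUV]
      simp
  have hdet : (U.map ⇑C).det * (V.map ⇑C).det = 1 := by
    rw [← det_mul, ← Matrix.map_mul, hUV]
    simp
  unfold Matrix.charpoly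
  rw [key, det_mul, det_mul, mul_comm, ← mul_assoc, mul_comm ((V.map ⇑C).det), hdet, one_mul]

lemma charpoly_roots_hermitian {n : ℕ} {A : Matrix (Fin n) (Fin n) ℂ} (hA : A.IsHermitian) :
    A.charpoly.roots = Multiset.map (fun i => (hA.eigenvalues i : ℂ)) Finset.univ.val := by
  have h1 : A.charpoly = (diagonal (fun i => (hA.eigenvalues i : ℂ))).charpoly := by
    conv_lhs => rw [hA.spectral_theorem, Unitary.conjStarAlgAut_apply]
    rw [charpoly_conj_units]
    · rfl
    · exact Matrix.mem_unitaryGroup_iff.mp (hA.eigenvectorUnitary).2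
  rw [h1, charpoly_of_upperTriangular _ (blockTriangular_diagonal _)]
  have h2 : ∏ i : Fin n, (X - C (diagonal (fun i => (hA.eigenvalues i : ℂ)) i i))
      = (Multiset.map (fun a => X - C a)
          (Multiset.map (fun i => (hA.eigenvalues i : ℂ)) Finset.univ.val)).prod := by
    simp [Finset.prod, Multiset.map_map, Function.comp_def]
  rw [h2, roots_multiset_prod_X_sub_C]

lemma toEuclideanLin_of_mulVec {n : ℕ} (P : Matrix (Fin n) (Fin n) ℂ)
    (v : EuclideanSpace ℂ (Fin n)) (c : ℂ) (h : P *ᵥ ⇑v = c • ⇑v) :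
    Matrix.toEuclideanLin P v = c • v := by
  rw [toEuclideanLin_apply]
  apply (WithLp.equiv 2 (Fin n → ℂ)).injective
  simpa using h


lemma eig_multiset {n : ℕ} {A : Matrix (Fin n) (Fin n) ℂ} (hA : A.IsHermitian) (α : Fin n → ℝ)
    (hαs : A.charpoly.roots = Multiset.map (fun i => (α i : ℂ)) Finset.univ.val) :
    Multiset.map hA.eigenvalues Finset.univ.val = Multiset.map α Finset.univ.val := by
  have h := charpoly_roots_hermitian hA
  rw [hαs] at h
  apply Multiset.map_injective (f := (Complex.ofReal : ℝ → ℂ)) Complex.ofReal_injective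
  rw [Multiset.map_map, Multiset.map_map]
  exact h.symm

lemma herm_eig {n : ℕ} {A : Matrix (Fin n) (Fin n) ℂ} (hA : A.IsHermitian) (j : Fin n) :
    Matrix.toEuclideanLin A (hA.eigenvectorBasis j)
      = (hA.eigenvalues j : ℂ) • hA.eigenvectorBasis j := by
  apply toEuclideanLin_of_mulVec
  rw [hA.mulVec_eigenvectorBasis, RCLike.real_smul_eq_coe_smul (K := ℂ)]
  rfl

lemma map_perm_multiset {n : ℕ} (e : Equiv.Perm (Fin n)) (f : Fin n → ℝ) :
    Multiset.map (fun i => f (e i)) Finset.univ.val = Multiset.map f Finset.univ.val := by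
  have h : Multiset.map (⇑e) Finset.univ.val = Finset.univ.val := by
    have := congrArg Finset.val (Finset.map_univ_equiv e)
    simpa [Finset.map_val] using this
  calc Multiset.map (fun i => f (e i)) Finset.univ.val
      = Multiset.map f (Multiset.map (⇑e) Finset.univ.val) := by
        rw [Multiset.map_map]; rfl
    _ = Multiset.map f Finset.univ.val := by rw [h]

lemma sum_comp_eq {n : ℕ} {f g : Fin n → ℝ}
    (h : Multiset.map f Finset.univ.val = Multiset.map g Finset.univ.val) (φ : ℝ → ℝ) :
    ∑ i, φ (f i) = ∑ i, φ (g i) := by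
  have := congrArg (fun m => (Multiset.map φ m).sum) h
  simpa [Multiset.map_map, Function.comp_def, Finset.sum] using this

lemma trace_conj_diag {n : ℕ} (U : Matrix.unitaryGroup (Fin n) ℂ) (d : Fin n → ℂ) :
    ((U : Matrix (Fin n) (Fin n) ℂ) * diagonal d * star (U : Matrix (Fin n) (Fin n) ℂ)).trace
      = ∑ i, d i := by
  rw [Matrix.trace_mul_cycle,
    (Matrix.mem_unitaryGroup_iff'.mp U.2 : star (U : Matrix (Fin n) (Fin n) ℂ) * U = 1),
    one_mul, trace_diagonal]

lemma trace_herm {n : ℕ} {A : Matrix (Fin n) (Fin n) ℂ} (hA : A.IsHermitian) :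
    A.trace = ∑ i, (hA.eigenvalues i : ℂ) := by
  conv_lhs => rw [hA.spectral_theorem]
  exact trace_conj_diag hA.eigenvectorUnitary _

lemma card_filter_lt {n k : ℕ} (hkn : k ≤ n) :
    (Finset.univ.filter (fun j : Fin n => j.1 < k)).card = k := by
  apply Finset.card_eq_of_bijective (fun i hi => (⟨i, lt_of_lt_of_le hi hkn⟩ : Fin n))
  · intro a ha
    exact ⟨a.1, (Finset.mem_filter.mp ha).2, rfl⟩
  · intro i hi
    simp [hi]
  · intro i j hi hj hij
    simpa using congrArg Fin.val hij


lemma diag_sub_smul_one {n : ℕ} (f : Fin n → ℝ) (t : ℝ) :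
    diagonal (fun j => ((f j : ℝ) : ℂ)) - (t : ℂ) • 1 = diagonal (fun j => ((f j - t : ℝ) : ℂ)) := by
  ext i j
  rcases eq_or_ne i j with rfl | hne
  · simp [Matrix.one_apply]
  · simp [hne, Matrix.one_apply, Matrix.diagonal_apply_ne _ hne]

/-- Wielandt: Let `A = B + C` be Hermitian matrices of order `n`, and let
`α, β, γ : Fin n → ℝ` list the eigenvalues of `A`, `B`, `C` respectively in nonincreasing
order (with multiplicity, i.e. the roots of the characteristic polynomials). Then for any
subset `I ⊆ {1, …, n}` we have `∑_{i ∈ I} λ_i(A) ≤ ∑_{i=1}^{|I|} λ_i(B) + ∑_{i ∈ I} λ_i(C)`. -/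
theorem wielandt (n : ℕ) (A B C : Matrix (Fin n) (Fin n) ℂ)
    (hA : A.IsHermitian) (hB : B.IsHermitian) (hC : C.IsHermitian) (hABC : A = B + C)
    (α β γ : Fin n → ℝ) (hα : Antitone α) (hβ : Antitone β) (hγ : Antitone γ)
    (hαs : A.charpoly.roots = Multiset.map (fun i => (α i : ℂ)) (Finset.univ : Finset (Fin n)).val)
    (hβs : B.charpoly.roots = Multiset.map (fun i => (β i : ℂ)) (Finset.univ : Finset (Fin n)).val)
    (hγs : C.charpoly.roots = Multiset.map (fun i => (γ i : ℂ)) (Finset.univ : Finset (Fin n)).val) :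
    ∀ I : Finset (Fin n),
      ∑ i ∈ I, α i ≤
        (∑ j ∈ Finset.univ.filter (fun j : Fin n => j.1 < I.card), β j) + ∑ i ∈ I, γ i := by
  intro I
  classical
  by_cases hI : I = ∅
  · subst hI; simp
  set k := I.card with hk
  have hk1 : 1 ≤ k := Finset.card_pos.mpr (Finset.nonempty_iff_ne_empty.mpr hI)
  have hkn : k ≤ n := by simpa using Finset.card_le_card (Finset.subset_univ I)
  set idx : Fin n := ⟨k - 1, by omega⟩ with hidx
  set t : ℝ := β idx with ht
  set tC : ℂ := (t : ℂ) with htC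
  have hmA := eig_multiset hA α hαs
  have hmB := eig_multiset hB β hβs
  have hmC := eig_multiset hC γ hγs
  set U : Matrix (Fin n) (Fin n) ℂ := (hB.eigenvectorUnitary : Matrix (Fin n) (Fin n) ℂ) with hU
  set eB := hB.eigenvalues with heB
  set N : Matrix (Fin n) (Fin n) ℂ :=
    U * diagonal (fun j => ((max (eB j - t) 0 : ℝ) : ℂ)) * star U with hN
  have hUU : U * star U = 1 := Matrix.mem_unitaryGroup_iff.mp hB.eigenvectorUnitary.2
  have hNpsd : N.PosSemidef := by
    refine PosSemidef.mul_mul_conjTranspose_same ?_ U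
    exact posSemidef_diagonal_iff.mpr fun j => by
      rw [Complex.zero_le_real]; exact le_max_right _ _
  have hBt : B - tC • 1 = U * diagonal (fun j => ((eB j - t : ℝ) : ℂ)) * star U := by
    have h1 : tC • (1 : Matrix (Fin n) (Fin n) ℂ) = U * (tC • 1) * star U := by
      rw [Matrix.mul_smul, Matrix.mul_one, Matrix.smul_mul, hUU]
    rw [h1]
    conv_lhs => rw [hB.spectral_theorem, Unitary.conjStarAlgAut_apply]
    rw [← Matrix.sub_mul, ← Matrix.mul_sub]
    congr 2
    exact diag_sub_smul_one eB t
  have hNBt : (N - (B - tC • 1)).PosSemidef := by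
    rw [hBt, hN, ← Matrix.sub_mul, ← Matrix.mul_sub, Matrix.diagonal_sub]
    refine PosSemidef.mul_mul_conjTranspose_same ?_ U
    refine posSemidef_diagonal_iff.mpr fun j => ?_
    rw [← Complex.ofReal_sub, Complex.zero_le_real]
    exact sub_nonneg.mpr (le_max_left _ _)
  set D := C + N with hD
  have hDh : D.IsHermitian := hC.add hNpsd.isHermitian
  have hDC : (D - C).PosSemidef := by
    have : D - C = N := by rw [hD]; abel
    rw [this]; exact hNpsd
  have hDA : (D - (A - tC • 1)).PosSemidef := by
    have : D - (A - tC • 1) = N - (B - tC • 1) := by rw [hD, hABC]; abel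
    rw [this]; exact hNBt
  set σ : Equiv.Perm (Fin n) := Fin.revPerm.trans (Tuple.sort hDh.eigenvalues) with hσ
  set δ : Fin n → ℝ := fun i => hDh.eigenvalues (σ i) with hδ
  have hδa : Antitone δ := by
    intro i j hij
    have := Tuple.monotone_sort hDh.eigenvalues (Fin.rev_le_rev.mpr hij)
    simpa [hδ, hσ, Function.comp] using this
  have hmD : Multiset.map hDh.eigenvalues Finset.univ.val = Multiset.map δ Finset.univ.val :=
    (map_perm_multiset σ hDh.eigenvalues).symm
  have hw1 : ∀ i, α i - t ≤ δ i := by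
    intro i
    have hpα : Antitone (fun i => α i - t) := fun a b hab => by
      simpa using sub_le_sub_right (hα hab) t
    have hv : ∀ j, Matrix.toEuclideanLin (A - tC • 1) (hA.eigenvectorBasis j)
        = ((hA.eigenvalues j - t : ℝ) : ℂ) • hA.eigenvectorBasis j := by
      intro j
      apply toEuclideanLin_of_mulVec
      rw [Matrix.sub_mulVec, hA.mulVec_eigenvectorBasis, Matrix.smul_mulVec,
        Matrix.one_mulVec, RCLike.real_smul_eq_coe_smul (K := ℂ), Complex.ofReal_sub, sub_smul]
      rfl
    have hpe : Multiset.map (fun j => hA.eigenvalues j - t) Finset.univ.val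
        = Multiset.map (fun i => α i - t) Finset.univ.val := by
      have := congrArg (Multiset.map (fun x : ℝ => x - t)) hmA
      simpa [Multiset.map_map, Function.comp_def] using this
    exact weyl hDA hpα hδa hA.eigenvectorBasis hDh.eigenvectorBasis hv (herm_eig hDh) hpe hmD i
  have hw2 : ∀ i, γ i ≤ δ i := fun i =>
    weyl hDC hγ hδa hC.eigenvectorBasis hDh.eigenvectorBasis (herm_eig hC) (herm_eig hDh) hmC hmD i
  -- trace computation
  have htr : ∑ i, hDh.eigenvalues i = ∑ i, hC.eigenvalues i + ∑ j, max (eB j - t) 0 := by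
    have hDtr : D.trace = ∑ i, (hDh.eigenvalues i : ℂ) := trace_herm hDh
    have hCtr : C.trace = ∑ i, (hC.eigenvalues i : ℂ) := trace_herm hC
    have hNtr : N.trace = ∑ j, ((max (eB j - t) 0 : ℝ) : ℂ) :=
      trace_conj_diag hB.eigenvectorUnitary _
    have hadd : D.trace = C.trace + N.trace := by rw [hD, trace_add]
    have hC2 : ((∑ i, hDh.eigenvalues i : ℝ) : ℂ)
        = ((∑ i, hC.eigenvalues i + ∑ j, max (eB j - t) 0 : ℝ) : ℂ) := by
      push_cast
      rw [← hDtr, ← hCtr, ← hNtr, hadd]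
    exact_mod_cast hC2
  have hδsum : ∑ i, δ i = ∑ i, hDh.eigenvalues i := (sum_comp_eq hmD id).symm
  have hγsum : ∑ i, hC.eigenvalues i = ∑ i, γ i := sum_comp_eq hmC id
  have hβmax : ∑ j, max (eB j - t) 0 = ∑ j, max (β j - t) 0 :=
    sum_comp_eq hmB (fun x => max (x - t) 0)
  have hmax : ∑ j, max (β j - t) 0
      = ∑ j ∈ Finset.univ.filter (fun j : Fin n => j.1 < k), (β j - t) := by
    rw [← Finset.sum_filter_add_sum_filter_not Finset.univ (fun j : Fin n => j.1 < k)]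
    have e1 : ∀ j ∈ Finset.univ.filter (fun j : Fin n => j.1 < k), max (β j - t) 0 = β j - t := by
      intro j hj
      have hjk : j.1 < k := (Finset.mem_filter.mp hj).2
      have hle : j ≤ idx := by
        rw [Fin.le_def]
        simp only [hidx]
        omega
      have : t ≤ β j := hβ hle
      exact max_eq_left (by linarith)
    have e2 : ∀ j ∈ Finset.univ.filter (fun j : Fin n => ¬ j.1 < k), max (β j - t) 0 = 0 := by
      intro j hj
      have hjk : ¬ j.1 < k := (Finset.mem_filter.mp hj).2
      have hle : idx ≤ j := by
        rw [Fin.le_def]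
        simp only [hidx]
        omega
      have : β j ≤ t := hβ hle
      exact max_eq_right (by linarith)
    rw [Finset.sum_congr rfl e1, Finset.sum_congr rfl e2, Finset.sum_const_zero, add_zero]
  have hsum1 : ∑ i ∈ I, (α i - t - γ i) ≤ ∑ i ∈ I, (δ i - γ i) :=
    Finset.sum_le_sum fun i _ => by linarith [hw1 i]
  have hsum2 : ∑ i ∈ I, (δ i - γ i) ≤ ∑ i, (δ i - γ i) :=
    Finset.sum_le_sum_of_subset_of_nonneg (Finset.subset_univ I)
      (fun i _ _ => by linarith [hw2 i])
  have hL : ∑ i ∈ I, (α i - t - γ i) = (∑ i ∈ I, α i) - k * t - ∑ i ∈ I, γ i := by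
    rw [Finset.sum_sub_distrib, Finset.sum_sub_distrib, Finset.sum_const, nsmul_eq_mul, ← hk]
  have hR : ∑ i, (δ i - γ i) = (∑ i, δ i) - ∑ i, γ i := Finset.sum_sub_distrib _ _
  have hfil : ∑ j ∈ Finset.univ.filter (fun j : Fin n => j.1 < k), (β j - t)
      = (∑ j ∈ Finset.univ.filter (fun j : Fin n => j.1 < k), β j) - k * t := by
    rw [Finset.sum_sub_distrib, Finset.sum_const, card_filter_lt hkn, nsmul_eq_mul]
  have := hsum1.trans hsum2
  rw [hL, hR, hδsum, htr, hγsum, hβmax, hmax, hfil] at this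
  linarith


end LapPaper
end

section
/- If T is a tree with n vertices that is not a star, and μ_1 is the largest Laplacian eigenvalue of T, then μ_1 < n − 1/2. -/
open Polynomial

namespace LapPaper

open Finset

set_option linter.unusedSectionVars false

section Aux

variable {V : Type} [Fintype V] [DecidableEq V]

lemma no_triangle {T : SimpleGraph V} (hT : T.IsTree) {a b c : V}
    (hab : T.Adj a b) (hbc : T.Adj b c) (hac : T.Adj a c) : False := by
  obtain ⟨p, hp, hup⟩ := hT.existsUnique_path a c
  have h1 : (SimpleGraph.Walk.cons hac SimpleGraph.Walk.nil : T.Walk a c).IsPath := by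
    simp [SimpleGraph.Walk.isPath_def, hac.ne]
  have h2 : (SimpleGraph.Walk.cons hab (SimpleGraph.Walk.cons hbc SimpleGraph.Walk.nil) :
      T.Walk a c).IsPath := by
    simp [SimpleGraph.Walk.isPath_def, hab.ne, hbc.ne, hac.ne]
  have := (hup _ h1).trans (hup _ h2).symm
  have hl := congrArg SimpleGraph.Walk.length this
  simp at hl

lemma star_iso {T : SimpleGraph V} (hT : T.IsTree) {n : ℕ} (hcard : Fintype.card V = n)
    (v : V) (hv : ∀ u, u ≠ v → T.Adj v u) : Nonempty (T ≃g starGraph n) := by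
  have hn : 0 < n := by
    rw [← hcard]; exact Fintype.card_pos_iff.2 ⟨v⟩
  set z : Fin n := ⟨0, hn⟩ with hz
  let e₀ := Fintype.equivFinOfCardEq hcard
  let e : V ≃ Fin n := e₀.trans (Equiv.swap (e₀ v) z)
  have hev : e v = z := by simp [e, Equiv.swap_apply_left]
  have hadj : ∀ a b, T.Adj a b ↔ a ≠ b ∧ (a = v ∨ b = v) := by
    intro a b
    constructor
    · intro h
      refine ⟨h.ne, ?_⟩
      by_contra hc
      push_neg at hc
      exact no_triangle hT (hv a hc.1) h (hv b hc.2)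
    · rintro ⟨hne, h | h⟩
      · subst h; exact hv b (Ne.symm hne)
      · subst h; exact (hv a hne).symm
  refine ⟨⟨e, ?_⟩⟩
  intro a b
  rw [hadj]
  simp only [starGraph, SimpleGraph.fromRel_adj]
  constructor
  · rintro ⟨hne, h | h⟩
    · refine ⟨fun hc => hne (congrArg e hc), Or.inl ?_⟩
      have : e a = z := Fin.ext h
      rw [← hev] at this
      exact e.injective this
    · refine ⟨fun hc => hne (congrArg e hc), Or.inr ?_⟩
      have : e b = z := Fin.ext h
      rw [← hev] at this
      exact e.injective this
  · rintro ⟨hne, h | h⟩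
    · exact ⟨fun hc => hne (e.injective (by rw [hc])), Or.inl (by rw [h, hev])⟩
    · exact ⟨fun hc => hne (e.injective (by rw [hc])), Or.inr (by rw [h, hev])⟩

lemma adj_all_of_deg {T : SimpleGraph V} [DecidableRel T.Adj] {v : V}
    (hd : T.degree v = Fintype.card V - 1) : ∀ u, u ≠ v → T.Adj v u := by
  intro u hu
  have hsub : T.neighborFinset v ⊆ univ.erase v := by
    intro w hw
    rw [SimpleGraph.mem_neighborFinset] at hw
    exact mem_erase.2 ⟨hw.ne', mem_univ _⟩
  have hcards : (univ.erase v).card = Fintype.card V - 1 := by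
    rw [card_erase_of_mem (mem_univ _), card_univ]
  have heq : T.neighborFinset v = univ.erase v := by
    apply Finset.eq_of_subset_of_card_le hsub
    rw [hcards, ← hd, SimpleGraph.card_neighborFinset_eq_degree]
  have : u ∈ T.neighborFinset v := by
    rw [heq]; exact mem_erase.2 ⟨hu, mem_univ _⟩
  rwa [SimpleGraph.mem_neighborFinset] at this

lemma exists_big_deg {T : SimpleGraph V} [DecidableRel T.Adj] (hT : T.IsTree) {n : ℕ}
    (hcard : Fintype.card V = n) (hn2 : 2 ≤ n) (hn3 : n ≤ 3) :
    ∃ v, T.degree v = n - 1 := by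
  by_contra hc
  push_neg at hc
  have hdle : ∀ v, T.degree v ≤ n - 2 := by
    intro v
    have h1 : T.degree v < Fintype.card V := T.degree_lt_card_verts v
    have := hc v
    omega
  have hsum : ∑ v : V, T.degree v = 2 * (n - 1) := by
    rw [SimpleGraph.sum_degrees_eq_twice_card_edges]
    have := hT.card_edgeFinset
    omega
  have hub : ∑ v : V, T.degree v ≤ n * (n - 2) := by
    calc ∑ v : V, T.degree v ≤ ∑ _v : V, (n - 2) := Finset.sum_le_sum fun v _ => hdle v
    _ = n * (n - 2) := by rw [Finset.sum_const, card_univ, hcard, smul_eq_mul]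
  interval_cases n <;> omega

lemma nbr_deg_sum_le {T : SimpleGraph V} [DecidableRel T.Adj] (hT : T.IsTree) (i : V) :
    ∑ j ∈ T.neighborFinset i, T.degree j ≤ Fintype.card V - 1 := by
  have hE : T.edgeFinset.card + 1 = Fintype.card V := hT.card_edgeFinset
  have key : ∑ j ∈ T.neighborFinset i, T.degree j ≤ T.edgeFinset.card := by
    have h1 : ∑ j ∈ T.neighborFinset i, T.degree j =
        ((T.neighborFinset i).sigma (fun j => T.neighborFinset j)).card := by
      rw [Finset.card_sigma]
      simp [SimpleGraph.card_neighborFinset_eq_degree]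
    rw [h1]
    apply Finset.card_le_card_of_injOn (fun p => s(p.1, p.2))
    · intro p hp
      rw [Finset.mem_coe, Finset.mem_sigma] at hp
      simp only [Finset.mem_coe, SimpleGraph.mem_edgeFinset, SimpleGraph.mem_edgeSet]
      exact (SimpleGraph.mem_neighborFinset _ _ _).1 hp.2
    · intro p hp q hq hpq
      rw [Finset.mem_coe, Finset.mem_sigma, SimpleGraph.mem_neighborFinset,
        SimpleGraph.mem_neighborFinset] at hp hq
      rw [Sym2.eq_iff] at hpq
      rcases hpq with ⟨h1, h2⟩ | ⟨h1, h2⟩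
      · exact Sigma.ext h1 (heq_of_eq h2)
      · exact absurd (h2 ▸ hq.1) (fun h => no_triangle hT hp.1 hp.2 h)
  omega

lemma eval_charpoly' (M : Matrix V V ℝ) (μ : ℝ) :
    M.charpoly.eval μ = (μ • (1 : Matrix V V ℝ) - M).det := by
  rw [Matrix.charpoly, ← Polynomial.coe_evalRingHom, RingHom.map_det]
  congr 1
  ext i j
  by_cases h : i = j <;>
    simp [Matrix.charmatrix_apply, Matrix.one_apply, h, Matrix.diagonal_apply]

lemma gersh [Nonempty V] (M : Matrix V V ℝ) {μ : ℝ} (x : V → ℝ) (hx : x ≠ 0)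
    (heig : M.mulVec x = (fun i => μ * x i)) (B : ℝ)
    (hR : ∀ i, ∑ j, |M i j| ≤ B)
    (hs : ∀ i, ∑ j, |M i j| = B → ∃ j, M i j ≠ 0 ∧ ∑ k, |M j k| < B) :
    μ < B := by
  obtain ⟨i₀, -, hmax⟩ := Finset.exists_max_image (univ : Finset V) (fun i => |x i|)
    ⟨Classical.arbitrary V, mem_univ _⟩
  have hi₀pos : 0 < |x i₀| := by
    rcases Function.ne_iff.1 hx with ⟨j, hj⟩
    calc 0 < |x j| := abs_pos.2 hj
    _ ≤ |x i₀| := hmax j (mem_univ _)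
  have key : ∀ i, |x i| = |x i₀| → |μ| * |x i₀| ≤ (∑ j, |M i j|) * |x i₀| := by
    intro i hi
    have h1 : μ * x i = ∑ j, M i j * x j := by
      have := congrFun heig i
      rw [Matrix.mulVec, dotProduct] at this
      exact this.symm
    calc |μ| * |x i₀| = |μ * x i| := by rw [abs_mul, hi]
    _ = |∑ j, M i j * x j| := by rw [h1]
    _ ≤ ∑ j, |M i j * x j| := Finset.abs_sum_le_sum_abs _ _
    _ ≤ ∑ j, |M i j| * |x i₀| := by
        refine Finset.sum_le_sum fun j _ => ?_
        rw [abs_mul]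
        exact mul_le_mul_of_nonneg_left (hmax j (mem_univ _)) (abs_nonneg _)
    _ = (∑ j, |M i j|) * |x i₀| := by rw [Finset.sum_mul]
  have hle : |μ| ≤ B := by
    have := key i₀ rfl
    have h2 := le_trans this (mul_le_mul_of_nonneg_right (hR i₀) (le_of_lt hi₀pos))
    exact le_of_mul_le_mul_right h2 hi₀pos
  rcases lt_or_eq_of_le hle with h | h
  · exact lt_of_le_of_lt (le_abs_self μ) h
  exfalso
  have hRi₀ : ∑ j, |M i₀ j| = B := by
    have h1 := key i₀ rfl
    rw [h] at h1
    exact le_antisymm (hR i₀) (le_of_mul_le_mul_right h1 hi₀pos)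
  have hnb : ∀ j, M i₀ j ≠ 0 → |x j| = |x i₀| := by
    intro j hj
    by_contra hne
    have hjlt : |x j| < |x i₀| := lt_of_le_of_ne (hmax j (mem_univ _)) hne
    have h1 : μ * x i₀ = ∑ k, M i₀ k * x k := by
      have := congrFun heig i₀
      rw [Matrix.mulVec, dotProduct] at this
      exact this.symm
    have hstrict : |μ| * |x i₀| < B * |x i₀| := by
      calc |μ| * |x i₀| = |∑ k, M i₀ k * x k| := by rw [← h1, abs_mul]
      _ ≤ ∑ k, |M i₀ k * x k| := Finset.abs_sum_le_sum_abs _ _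
      _ < ∑ k, |M i₀ k| * |x i₀| := by
          refine Finset.sum_lt_sum (fun k _ => by
            rw [abs_mul]
            exact mul_le_mul_of_nonneg_left (hmax k (mem_univ _)) (abs_nonneg _))
            ⟨j, mem_univ _, by
              rw [abs_mul]
              exact mul_lt_mul_of_pos_left hjlt (abs_pos.2 hj)⟩
      _ = (∑ k, |M i₀ k|) * |x i₀| := by rw [Finset.sum_mul]
      _ = B * |x i₀| := by rw [hRi₀]
    rw [h] at hstrict
    exact lt_irrefl _ hstrict
  obtain ⟨j, hj, hjR⟩ := hs i₀ hRi₀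
  have hxj : |x j| = |x i₀| := hnb j hj
  have h1 := key j hxj
  rw [h] at h1
  exact absurd (le_of_mul_le_mul_right h1 hi₀pos) (not_le.2 hjR)

lemma rowsum_eq (T : SimpleGraph V) [DecidableRel T.Adj] (hd0 : ∀ v, (T.degree v : ℝ) ≠ 0)
    (i : V) :
    ∑ j, |((Matrix.diagonal (fun v => ((T.degree v : ℝ))⁻¹) * T.lapMatrix ℝ *
        Matrix.diagonal (fun v => (T.degree v : ℝ))) i j)| =
      (T.degree i : ℝ) + (∑ j ∈ T.neighborFinset i, (T.degree j : ℝ)) / (T.degree i : ℝ) := by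
  have hN : ∀ j, (Matrix.diagonal (fun v => ((T.degree v : ℝ))⁻¹) * T.lapMatrix ℝ *
      Matrix.diagonal (fun v => (T.degree v : ℝ))) i j
      = ((T.degree i : ℝ))⁻¹ * T.lapMatrix ℝ i j * (T.degree j : ℝ) := by
    intro j
    rw [Matrix.mul_diagonal, Matrix.diagonal_mul]
  have hdi : (0:ℝ) < (T.degree i : ℝ) := lt_of_le_of_ne (Nat.cast_nonneg _) (Ne.symm (hd0 i))
  have habs : ∀ j, |((Matrix.diagonal (fun v => ((T.degree v : ℝ))⁻¹) * T.lapMatrix ℝ *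
      Matrix.diagonal (fun v => (T.degree v : ℝ))) i j)| =
      (if T.Adj i j then ((T.degree i : ℝ))⁻¹ * (T.degree j : ℝ) else 0) +
        (if j = i then (T.degree i : ℝ) else 0) := by
    intro j
    rw [hN j]
    by_cases h : j = i
    · subst h
      have hL : T.lapMatrix ℝ j j = (T.degree j : ℝ) := by
        simp [SimpleGraph.lapMatrix, SimpleGraph.degMatrix]
      have he : ((T.degree j : ℝ))⁻¹ * (T.degree j : ℝ) * (T.degree j : ℝ) = (T.degree j : ℝ) := by
        field_simp
      rw [hL, if_pos rfl, if_neg (T.irrefl), he, zero_add]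
      exact abs_of_pos hdi
    · rw [if_neg h, add_zero]
      by_cases hadj : T.Adj i j
      · have hL : T.lapMatrix ℝ i j = -1 := by
          simp [SimpleGraph.lapMatrix, SimpleGraph.degMatrix, hadj,
            Matrix.diagonal_apply_ne _ (fun hc => h hc.symm)]
        rw [hL, if_pos hadj]
        have he : ((T.degree i : ℝ))⁻¹ * (-1) * (T.degree j : ℝ) =
            -(((T.degree i : ℝ))⁻¹ * (T.degree j : ℝ)) := by ring
        rw [he, abs_neg, abs_of_nonneg (by positivity)]
      · have hL : T.lapMatrix ℝ i j = 0 := by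
          simp [SimpleGraph.lapMatrix, SimpleGraph.degMatrix, hadj,
            Matrix.diagonal_apply_ne _ (fun hc => h hc.symm)]
        rw [hL, if_neg hadj]
        simp
  rw [Finset.sum_congr rfl (fun j _ => habs j), Finset.sum_add_distrib,
    Finset.sum_ite_eq' univ i (fun _ => (T.degree i : ℝ))]
  rw [if_pos (mem_univ i), SimpleGraph.neighborFinset_eq_filter, add_comm]
  congr 1
  calc ∑ j, (if T.Adj i j then ((T.degree i : ℝ))⁻¹ * (T.degree j : ℝ) else 0)
      = ∑ j ∈ univ.filter (T.Adj i), ((T.degree i : ℝ))⁻¹ * (T.degree j : ℝ) :=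
        (Finset.sum_filter _ _).symm
    _ = ((T.degree i : ℝ))⁻¹ * ∑ j ∈ univ.filter (T.Adj i), (T.degree j : ℝ) :=
        (Finset.mul_sum _ _ _).symm
    _ = (∑ j ∈ univ.filter (T.Adj i), (T.degree j : ℝ)) / (T.degree i : ℝ) := by
        rw [div_eq_inv_mul]

lemma row_le {n : ℕ} (hn : 4 ≤ n) {D S : ℝ} (hD2 : D = 1 ∨ 2 ≤ D)
    (hDmax : D ≤ (n:ℝ) - 2) (hS : S ≤ (n:ℝ) - 1) (hS0 : 0 ≤ S)
    (hleaf : D = 1 → S ≤ (n:ℝ) - 2) : D + S / D ≤ (n:ℝ) - 1/2 := by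
  have hnR : (4:ℝ) ≤ (n:ℝ) := by exact_mod_cast hn
  rcases hD2 with h1 | h2
  · subst h1
    have := hleaf rfl
    rw [div_one]
    linarith
  · have hDpos : (0:ℝ) < D := by linarith
    have key : D * D + S ≤ ((n:ℝ) - 1/2) * D := by
      nlinarith [mul_nonneg (by linarith : (0:ℝ) ≤ D - 2) (by linarith : (0:ℝ) ≤ (n:ℝ) - 2 - D)]
    have h3 : D + S / D = (D * D + S) / D := by
      field_simp
    rw [h3]
    rw [div_le_iff₀ hDpos]
    calc D * D + S ≤ ((n:ℝ) - 1/2) * D := key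
    _ = ((n:ℝ) - 1/2) * D := rfl

lemma row_eq_case {n : ℕ} (hn : 4 ≤ n) {D S : ℝ} (hD2 : 2 ≤ D)
    (hDmax : D ≤ (n:ℝ) - 2) (hS : S ≤ (n:ℝ) - 1)
    (heq : D + S / D = (n:ℝ) - 1/2) : (n:ℝ) = 4 ∧ D = 2 ∧ S = 3 := by
  have hnR : (4:ℝ) ≤ (n:ℝ) := by exact_mod_cast hn
  have hDpos : (0:ℝ) < D := by linarith
  have heqD : D * D + S = ((n:ℝ) - 1/2) * D := by
    field_simp at heq
    linarith [heq]
  have hprod : (0:ℝ) ≤ (D - 2) * ((n:ℝ) - 2 - D) :=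
    mul_nonneg (by linarith) (by linarith)
  have hn4 : (n:ℝ) ≤ 4 := by nlinarith
  have hneq : (n:ℝ) = 4 := le_antisymm hn4 hnR
  have hD : D = 2 := le_antisymm (by rw [hneq] at hDmax; linarith) hD2
  refine ⟨hneq, hD, ?_⟩
  rw [hD, hneq] at heqD
  linarith

end Aux

/-- If `T` is a tree with `n` vertices that is not a star, then its largest
Laplacian eigenvalue `μ₁ = S₁(T)` satisfies `μ₁ < n - 1/2`. -/
theorem mu_one_lt_of_not_star {V : Type} [Fintype V] [DecidableEq V]
    (T : SimpleGraph V) [DecidableRel T.Adj] (n : ℕ) (hcard : Fintype.card V = n)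
    (hT : T.IsTree) (hstar : IsEmpty (T ≃g starGraph n)) :
    Sk T 1 < (n : ℝ) - 1 / 2 := by
  have hconn : T.Connected := hT.isConnected
  have hne : Nonempty V := hconn.nonempty
  have hn1 : 1 ≤ n := by rw [← hcard]; exact Fintype.card_pos
  by_cases hn4 : n ≤ 3
  · exfalso
    have hiso : Nonempty (T ≃g starGraph n) := by
      by_cases hn1' : n = 1
      · obtain ⟨v⟩ := hne
        refine star_iso hT hcard v ?_
        intro u hu
        exfalso
        have hc1 : Fintype.card V ≤ 1 := by omega
        exact hu (Fintype.card_le_one_iff.1 hc1 u v)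
      · obtain ⟨v, hv⟩ := exists_big_deg hT hcard (by omega) hn4
        exact star_iso hT hcard v (adj_all_of_deg (by rw [hcard]; exact hv))
    exact hstar.false hiso.some
  push_neg at hn4
  have hn4' : 4 ≤ n := hn4
  have hnR : (4:ℝ) ≤ (n:ℝ) := by exact_mod_cast hn4'
  -- degrees are positive
  have hdpos : ∀ v, 0 < T.degree v := by
    intro v
    have hnt : Nontrivial V := by
      rw [← Fintype.one_lt_card_iff_nontrivial]
      omega
    obtain ⟨u, hu⟩ := exists_ne v
    obtain ⟨w⟩ := hconn.preconnected v u
    rw [SimpleGraph.degree_pos_iff_exists_adj]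
    cases w with
    | nil => exact absurd rfl hu
    | cons h p => exact ⟨_, h⟩
  have hd0 : ∀ v, (T.degree v : ℝ) ≠ 0 := fun v => Nat.cast_ne_zero.2 (hdpos v).ne'
  have hd1R : ∀ v, (1:ℝ) ≤ (T.degree v : ℝ) := by
    intro v; exact_mod_cast hdpos v
  -- max degree at most n - 2
  have hdmax : ∀ v, T.degree v ≤ n - 2 := by
    intro v
    by_contra hc
    have h1 : T.degree v < Fintype.card V := T.degree_lt_card_verts v
    have h2 : T.degree v = n - 1 := by omega
    exact hstar.false (star_iso hT hcard v (adj_all_of_deg (by rw [hcard]; exact h2))).some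
  have hdmaxR : ∀ v, (T.degree v : ℝ) ≤ (n:ℝ) - 2 := by
    intro v
    have := hdmax v
    have h2 : (T.degree v : ℝ) ≤ ((n - 2 : ℕ) : ℝ) := by exact_mod_cast this
    have h3 : ((n - 2 : ℕ) : ℝ) = (n:ℝ) - 2 := by
      have : (2:ℕ) ≤ n := by omega
      push_cast [Nat.cast_sub this]
      ring
    linarith [h3 ▸ h2]
  -- neighbor degree sums
  have hSnat : ∀ i, ∑ j ∈ T.neighborFinset i, T.degree j ≤ n - 1 := by
    intro i
    have := nbr_deg_sum_le hT i
    omega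
  have hSR : ∀ i, ∑ j ∈ T.neighborFinset i, (T.degree j : ℝ) ≤ (n:ℝ) - 1 := by
    intro i
    have h1 : ((∑ j ∈ T.neighborFinset i, T.degree j : ℕ) : ℝ) ≤ (((n - 1 : ℕ)) : ℝ) := by
      exact_mod_cast hSnat i
    rw [Nat.cast_sum] at h1
    have h3 : ((n - 1 : ℕ) : ℝ) = (n:ℝ) - 1 := by
      push_cast [Nat.cast_sub hn1]
      ring
    linarith [h3 ▸ h1]
  have hSR0 : ∀ i, (0:ℝ) ≤ ∑ j ∈ T.neighborFinset i, (T.degree j : ℝ) :=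
    fun i => Finset.sum_nonneg fun j _ => Nat.cast_nonneg _
  -- leaf refinement
  have hleaf : ∀ i, T.degree i = 1 →
      ∑ j ∈ T.neighborFinset i, (T.degree j : ℝ) ≤ (n:ℝ) - 2 := by
    intro i hi
    have hcard1 : (T.neighborFinset i).card = 1 := by
      rw [SimpleGraph.card_neighborFinset_eq_degree]; exact hi
    obtain ⟨u, hu⟩ := Finset.card_eq_one.1 hcard1
    rw [hu, Finset.sum_singleton]
    exact hdmaxR u
  -- the conjugated Laplacian
  set N : Matrix V V ℝ := Matrix.diagonal (fun v => ((T.degree v : ℝ))⁻¹) * T.lapMatrix ℝ *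
    Matrix.diagonal (fun v => (T.degree v : ℝ)) with hNdef
  have hrowB : ∀ i, ∑ j, |N i j| ≤ (n:ℝ) - 1/2 := by
    intro i
    rw [hNdef, rowsum_eq T hd0 i]
    apply row_le hn4'
    · rcases Nat.lt_or_ge (T.degree i) 2 with h | h
      · left
        have hp := hdpos i
        have : T.degree i = 1 := by omega
        rw [this]; norm_num
      · right; exact_mod_cast h
    · exact hdmaxR i
    · exact hSR i
    · exact hSR0 i
    · intro hD1
      have : T.degree i = 1 := by exact_mod_cast hD1
      exact hleaf i this
  have hrowS : ∀ i, ∑ j, |N i j| = (n:ℝ) - 1/2 →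
      ∃ j, N i j ≠ 0 ∧ ∑ k, |N j k| < (n:ℝ) - 1/2 := by
    intro i hi
    rw [hNdef, rowsum_eq T hd0 i] at hi
    -- rule out leaves
    have hD2 : (2:ℝ) ≤ (T.degree i : ℝ) := by
      rcases Nat.lt_or_ge (T.degree i) 2 with h | h
      · exfalso
        have hp := hdpos i
        have h1 : T.degree i = 1 := by omega
        have h2 := hleaf i h1
        rw [h1] at hi
        simp only [Nat.cast_one, div_one] at hi
        linarith
      · exact_mod_cast h
    obtain ⟨hneq, hD, hS3⟩ := row_eq_case hn4' hD2 (hdmaxR i) (hSR i) hi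
    have hn4eq : n = 4 := by exact_mod_cast hneq
    have hdi2 : T.degree i = 2 := by exact_mod_cast hD
    have hSnat3 : ∑ j ∈ T.neighborFinset i, T.degree j = 3 := by
      have : ((∑ j ∈ T.neighborFinset i, T.degree j : ℕ) : ℝ) = 3 := by
        rw [Nat.cast_sum]; exact hS3
      exact_mod_cast this
    -- the neighborhood has two elements whose degrees sum to 3
    have hcard2 : (T.neighborFinset i).card = 2 := by
      rw [SimpleGraph.card_neighborFinset_eq_degree]; exact hdi2
    obtain ⟨u, w, huw, hNi⟩ := Finset.card_eq_two.1 hcard2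
    have hsum_uw : T.degree u + T.degree w = 3 := by
      rw [hNi, Finset.sum_pair huw] at hSnat3
      exact hSnat3
    -- one of u, w is a leaf
    have hleaf_ex : ∃ u', u' ∈ T.neighborFinset i ∧ T.degree u' = 1 := by
      rcases Nat.lt_or_ge (T.degree u) 2 with h | h
      · refine ⟨u, ?_, ?_⟩
        · rw [hNi]; exact Finset.mem_insert_self _ _
        · have hp := hdpos u
          omega
      · refine ⟨w, ?_, ?_⟩
        · rw [hNi]; exact Finset.mem_insert_of_mem (Finset.mem_singleton_self _)
        · have hp := hdpos w
          omega
    obtain ⟨u', hu'mem, hu'deg⟩ := hleaf_ex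
    have hadj : T.Adj i u' := (SimpleGraph.mem_neighborFinset _ _ _).1 hu'mem
    refine ⟨u', ?_, ?_⟩
    · -- the entry N i u' is nonzero
      have hNval : N i u' = ((T.degree i : ℝ))⁻¹ * T.lapMatrix ℝ i u' * (T.degree u' : ℝ) := by
        rw [hNdef, Matrix.mul_diagonal, Matrix.diagonal_mul]
      have hL : T.lapMatrix ℝ i u' = -1 := by
        simp [SimpleGraph.lapMatrix, SimpleGraph.degMatrix, hadj,
          Matrix.diagonal_apply_ne _ hadj.ne]
      rw [hNval, hL]
      have h1 : ((T.degree i : ℝ))⁻¹ ≠ 0 := inv_ne_zero (hd0 i)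
      have h2 := hd0 u'
      intro hc
      rcases mul_eq_zero.1 hc with hc1 | hc1
      · rcases mul_eq_zero.1 hc1 with hc2 | hc2
        · exact h1 hc2
        · norm_num at hc2
      · exact h2 hc1
    · -- the row sum at the leaf u' is strictly smaller
      rw [hNdef, rowsum_eq T hd0 u']
      have hNu' : T.neighborFinset u' = {i} := by
        apply Finset.eq_singleton_iff_unique_mem.2
        constructor
        · exact (SimpleGraph.mem_neighborFinset _ _ _).2 hadj.symm
        · intro y hy
          have hc1 : (T.neighborFinset u').card = 1 := by
            rw [SimpleGraph.card_neighborFinset_eq_degree]; exact hu'deg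
          obtain ⟨z, hz⟩ := Finset.card_eq_one.1 hc1
          have hyz : y = z := by rw [hz] at hy; exact Finset.mem_singleton.1 hy
          have hiz : i = z := by
            have : i ∈ T.neighborFinset u' := (SimpleGraph.mem_neighborFinset _ _ _).2 hadj.symm
            rw [hz] at this
            exact Finset.mem_singleton.1 this
          rw [hyz, ← hiz]
      rw [hu'deg, hNu', Finset.sum_singleton, hdi2]
      rw [hn4eq]
      norm_num
  -- unfold Sk
  rcases hrev : (((lapSpectrum T).sort (· ≤ ·)).reverse) with _ | ⟨μ, rest⟩
  · have hSk : Sk T 1 = 0 := by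
      unfold Sk
      rw [hrev]
      simp
    rw [hSk]
    linarith
  · have hSk : Sk T 1 = μ := by
      unfold Sk
      rw [hrev]
      simp
    rw [hSk]
    have hmem : μ ∈ lapSpectrum T := by
      have h1 : μ ∈ (((lapSpectrum T).sort (· ≤ ·)).reverse) := by
        rw [hrev]; exact List.mem_cons_self
      rw [List.mem_reverse] at h1
      exact (Multiset.mem_sort _).1 h1
    have hroot : (T.lapMatrix ℝ).charpoly.IsRoot μ := (Polynomial.mem_roots'.1 hmem).2
    -- transfer to the conjugated matrix
    have hdetL : (μ • (1 : Matrix V V ℝ) - T.lapMatrix ℝ).det = 0 := by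
      rw [← eval_charpoly']; exact hroot
    have hYX : Matrix.diagonal (fun v => ((T.degree v : ℝ))⁻¹) *
        Matrix.diagonal (fun v => (T.degree v : ℝ)) = 1 := by
      rw [Matrix.diagonal_mul_diagonal]
      have hfun : (fun v => ((T.degree v : ℝ))⁻¹ * (T.degree v : ℝ)) = fun _ => (1:ℝ) :=
        funext fun v => inv_mul_cancel₀ (hd0 v)
      rw [hfun, Matrix.diagonal_one]
    have hconj : μ • (1 : Matrix V V ℝ) - N =
        Matrix.diagonal (fun v => ((T.degree v : ℝ))⁻¹) *
          (μ • (1 : Matrix V V ℝ) - T.lapMatrix ℝ) *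
          Matrix.diagonal (fun v => (T.degree v : ℝ)) := by
      rw [Matrix.mul_sub, Matrix.sub_mul, hNdef]
      congr 1
      rw [Matrix.mul_smul, Matrix.mul_one, Matrix.smul_mul, hYX]
    have hdetN : (μ • (1 : Matrix V V ℝ) - N).det = 0 := by
      rw [hconj, Matrix.det_mul, Matrix.det_mul, hdetL]
      ring
    obtain ⟨x, hx0, hx⟩ := Matrix.exists_mulVec_eq_zero_iff.2 hdetN
    have heig : N.mulVec x = (fun i => μ * x i) := by
      have h1 : μ • x - N.mulVec x = 0 := by
        rw [← hx, Matrix.sub_mulVec, Matrix.smul_mulVec, Matrix.one_mulVec]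
      funext i
      have h2 := congrFun h1 i
      simp only [Pi.sub_apply, Pi.smul_apply, Pi.zero_apply, smul_eq_mul] at h2
      have h3 := congrFun (rfl : N.mulVec x = N.mulVec x) i
      linarith [h2]
    exact gersh N x hx0 heig ((n:ℝ) - 1/2) hrowB hrowS

end LapPaper
end
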